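/- arXiv:math/0605690 — 3 statements merged into one kernel-verified Lean document; each statement's English description precedes it below -/
import Mathlib

section
/- Suppose char k = p, H is a finite subgroup of GL_n(k), and p > |H| (p prime). Then GL_d * j(^H k[M_{n,n}]) = ^H k[M_{n,d}]. (Theorem 23(a).) -/
open MvPolynomial

/-- The action of `g ∈ GL_d(k)` on `k[M_{n,d}]` by `(g * F)(x) = F(x·g)`,
i.e. substituting `X(i,q) ↦ Σ_s X(i,s)·g(s,q)`. -/
noncomputable def colAct {k : Type*} [Field k] {n d : ℕ} (g : GL (Fin d) k) :
    MvPolynomial (Fin n × Fin d) k →ₐ[k] MvPolynomial (Fin n × Fin d) k :=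
  aeval fun p => ∑ s : Fin d, X (p.1, s) * C ((g : Matrix (Fin d) (Fin d) k) s p.2)

/-- The action of `h ∈ GL_n(k)` on `k[M_{n,d}]` by `(h · F)(x) = F(h⁻¹·x)`,
i.e. substituting `X(i,q) ↦ Σ_s (h⁻¹)(i,s)·X(s,q)`. -/
noncomputable def rowAct {k : Type*} [Field k] {n d : ℕ} (h : GL (Fin n) k) :
    MvPolynomial (Fin n × Fin d) k →ₐ[k] MvPolynomial (Fin n × Fin d) k :=
  aeval fun p =>
    ∑ s : Fin n, C (((h⁻¹ : GL (Fin n) k) : Matrix (Fin n) (Fin n) k) p.1 s) * X (s, p.2)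

/-- The embedding `j : k[M_{n,n}] → k[M_{n,d}]`, `X(i,q) ↦ X(i,q)`. -/
noncomputable def jmap {k : Type*} [Field k] {n d : ℕ} (hnd : n ≤ d) :
    MvPolynomial (Fin n × Fin n) k →ₐ[k] MvPolynomial (Fin n × Fin d) k :=
  aeval fun p => X (p.1, Fin.castLE hnd p.2)

/-- `^H k[M_{n,d}]`, the subalgebra of `H`-invariant polynomials. -/
def HinvAlg {k : Type*} [Field k] {n d : ℕ} (H : Subgroup (GL (Fin n) k)) :
    Subalgebra k (MvPolynomial (Fin n × Fin d) k) where
  carrier := {F | ∀ h ∈ H, rowAct h F = F}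
  mul_mem' := fun ha hb h hh => by rw [map_mul, ha h hh, hb h hh]
  add_mem' := fun ha hb h hh => by rw [map_add, ha h hh, hb h hh]
  algebraMap_mem' := fun r h hh => by simp

/-- `GL_d * j(^H k[M_{n,n}])`: the `k`-subalgebra of `k[M_{n,d}]` generated by all
polarizations `g * (j f)` of `H`-invariants of `n` vectors. -/
noncomputable def polarized {k : Type*} [Field k] {n d : ℕ} (hnd : n ≤ d)
    (H : Subgroup (GL (Fin n) k)) : Subalgebra k (MvPolynomial (Fin n × Fin d) k) :=
  Algebra.adjoin k
    {F | ∃ g : GL (Fin d) k, ∃ f ∈ HinvAlg (d := n) H, F = colAct g (jmap hnd f)}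

namespace Stmt11

variable {k : Type*} [Field k] {n d : ℕ}

/-- substitution on rows by a matrix `M`: `X(i,q) ↦ ∑ s M(i,s) X(s,q)`. -/
noncomputable def rsub {c : Type*} [Fintype c] (M : Matrix (Fin n) (Fin n) k) :
    MvPolynomial (Fin n × c) k →ₐ[k] MvPolynomial (Fin n × c) k :=
  aeval fun p => ∑ s : Fin n, C (M p.1 s) * X (s, p.2)

/-- substitution on columns by a matrix `M`: `X(i,e) ↦ ∑ q X(i,q) M(q,e)`. -/
noncomputable def csub {c1 c2 : Type*} [Fintype c1] (M : Matrix c1 c2 k) :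
    MvPolynomial (Fin n × c2) k →ₐ[k] MvPolynomial (Fin n × c1) k :=
  aeval fun p => ∑ q : c1, X (p.1, q) * C (M q p.2)

theorem rsub_X {c : Type*} [Fintype c] (M : Matrix (Fin n) (Fin n) k) (p : Fin n × c) :
    rsub M (X p) = ∑ s : Fin n, C (M p.1 s) * X (s, p.2) := aeval_X _ _

theorem csub_X {c1 c2 : Type*} [Fintype c1] (M : Matrix c1 c2 k) (p : Fin n × c2) :
    csub M (X p) = ∑ q : c1, X (p.1, q) * C (M q p.2) := aeval_X _ _

theorem rsub_rsub {c : Type*} [Fintype c] (M M' : Matrix (Fin n) (Fin n) k)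
    (F : MvPolynomial (Fin n × c) k) : rsub M (rsub M' F) = rsub (M' * M) F := by
  have h : (rsub (c := c) M).comp (rsub M') = rsub (M' * M) := by
    apply MvPolynomial.algHom_ext
    intro p
    simp only [AlgHom.comp_apply, rsub_X, map_sum, map_mul, algHom_C, Matrix.mul_apply,
      algebraMap_eq, Finset.sum_mul, Finset.mul_sum]
    rw [Finset.sum_comm]
    exact Finset.sum_congr rfl fun a _ => Finset.sum_congr rfl fun b _ => by ring
  show ((rsub M).comp (rsub M')) F = _
  rw [h]

theorem csub_csub {c1 c2 c3 : Type*} [Fintype c1] [Fintype c2] (M : Matrix c1 c2 k)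
    (M' : Matrix c2 c3 k) (F : MvPolynomial (Fin n × c3) k) :
    csub M (csub M' F) = csub (M * M') F := by
  have h : (csub (n := n) M).comp (csub M') = csub (M * M') := by
    apply MvPolynomial.algHom_ext
    intro p
    simp only [AlgHom.comp_apply, csub_X, map_sum, map_mul, algHom_C, Matrix.mul_apply,
      algebraMap_eq, Finset.sum_mul, Finset.mul_sum]
    rw [Finset.sum_comm]
    exact Finset.sum_congr rfl fun a _ => Finset.sum_congr rfl fun b _ => by ring
  show ((csub M).comp (csub M')) F = _
  rw [h]

theorem rsub_csub {c1 c2 : Type*} [Fintype c1] [Fintype c2] (M : Matrix (Fin n) (Fin n) k)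
    (M' : Matrix c1 c2 k) (F : MvPolynomial (Fin n × c2) k) :
    rsub M (csub M' F) = csub M' (rsub M F) := by
  have h : (rsub (c := c1) M).comp (csub M') = (csub M').comp (rsub M) := by
    apply MvPolynomial.algHom_ext
    intro p
    simp only [AlgHom.comp_apply, csub_X, rsub_X, map_sum, map_mul, algHom_C,
      algebraMap_eq, Finset.sum_mul, Finset.mul_sum]
    rw [Finset.sum_comm]
    exact Finset.sum_congr rfl fun a _ => Finset.sum_congr rfl fun b _ => by ring
  show ((rsub M).comp (csub M')) F = ((csub M').comp (rsub M)) F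
  rw [h]

theorem rsub_one {c : Type*} [Fintype c] (F : MvPolynomial (Fin n × c) k) :
    rsub 1 F = F := by
  have h : (rsub (n := n) (c := c) (1 : Matrix _ _ k)) = AlgHom.id k _ := by
    apply MvPolynomial.algHom_ext
    intro p
    simp [rsub_X, Matrix.one_apply, ite_smul]
  rw [h]; rfl


/-- generic row action of `h`, on any column type. -/
noncomputable def hact {c : Type*} [Fintype c] (h : GL (Fin n) k) :
    MvPolynomial (Fin n × c) k →ₐ[k] MvPolynomial (Fin n × c) k :=
  rsub (((h⁻¹ : GL (Fin n) k) : Matrix (Fin n) (Fin n) k))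

theorem rowAct_eq_hact (h : GL (Fin n) k) :
    (rowAct h : MvPolynomial (Fin n × Fin d) k →ₐ[k] _) = hact h := rfl

theorem colAct_eq_csub (g : GL (Fin d) k) :
    (colAct g : MvPolynomial (Fin n × Fin d) k →ₐ[k] _)
      = csub (g : Matrix (Fin d) (Fin d) k) := rfl

/-- the inclusion matrix giving `jmap`. -/
def jMat (hnd : n ≤ d) : Matrix (Fin d) (Fin n) k :=
  fun q e => if q = Fin.castLE hnd e then 1 else 0

theorem jmap_eq_csub (hnd : n ≤ d) :
    (jmap hnd : MvPolynomial (Fin n × Fin n) k →ₐ[k] MvPolynomial (Fin n × Fin d) k)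
      = csub (jMat hnd) := by
  apply MvPolynomial.algHom_ext
  intro p
  simp only [jmap, aeval_X, csub, jMat]
  rw [Finset.sum_congr rfl (fun q _ => by rw [apply_ite C, C_1, C_0, mul_ite, mul_one, mul_zero])]
  rw [Finset.sum_ite_eq' Finset.univ (Fin.castLE hnd p.2) (fun q => X (p.1, q))]
  simp only [Finset.mem_univ, if_true]

theorem hact_hact {c : Type*} [Fintype c] (g h : GL (Fin n) k) (F : MvPolynomial (Fin n × c) k) :
    hact g (hact h F) = hact (g * h) F := by
  unfold hact
  rw [rsub_rsub, mul_inv_rev, Units.val_mul]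

theorem hact_one {c : Type*} [Fintype c] (F : MvPolynomial (Fin n × c) k) :
    hact (1 : GL (Fin n) k) F = F := by
  unfold hact
  rw [inv_one]
  exact rsub_one F

theorem hact_csub {c1 c2 : Type*} [Fintype c1] [Fintype c2] (h : GL (Fin n) k)
    (M : Matrix c1 c2 k) (F : MvPolynomial (Fin n × c2) k) :
    hact h (csub M F) = csub M (hact h F) := rsub_csub _ _ _

section Rey

variable {H : Subgroup (GL (Fin n) k)} [Fintype ↥H]

/-- Reynolds operator. -/
noncomputable def rey (H : Subgroup (GL (Fin n) k)) [Fintype ↥H] {c : Type*} [Fintype c]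
    (F : MvPolynomial (Fin n × c) k) : MvPolynomial (Fin n × c) k :=
  (Nat.card ↥H : k)⁻¹ • ∑ h : ↥H, hact (h : GL (Fin n) k) F

theorem hact_rey {c : Type*} [Fintype c] {h : GL (Fin n) k} (hh : h ∈ H)
    (F : MvPolynomial (Fin n × c) k) : hact h (rey H F) = rey H F := by
  unfold rey
  rw [map_smul, map_sum]
  refine congrArg (fun s => (Nat.card ↥H : k)⁻¹ • s) ?_
  refine Fintype.sum_equiv (Equiv.mulLeft (⟨h, hh⟩ : ↥H)) _ _ fun x => ?_
  rw [hact_hact]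
  rfl

theorem rey_of_invariant {c : Type*} [Fintype c] (hN : (Nat.card ↥H : k) ≠ 0)
    {F : MvPolynomial (Fin n × c) k} (hF : ∀ h ∈ H, hact h F = F) : rey H F = F := by
  unfold rey
  rw [Finset.sum_congr rfl (fun h _ => hF h.1 h.2), Finset.sum_const, Finset.card_univ,
    ← Nat.card_eq_fintype_card, ← Nat.cast_smul_eq_nsmul k, smul_smul, inv_mul_cancel₀ hN,
    one_smul]

theorem rey_C_mul {c : Type*} [Fintype c] (a : k) (F : MvPolynomial (Fin n × c) k) :
    rey H (C a * F) = C a * rey H F := by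
  unfold rey
  rw [Finset.sum_congr rfl (fun h _ => by
    rw [map_mul, show (hact (h : GL (Fin n) k)) (C a) = C a from algHom_C _ a]),
    ← Finset.mul_sum, mul_smul_comm]

theorem rey_invariant_mul {c : Type*} [Fintype c] {u : MvPolynomial (Fin n × c) k}
    (hu : ∀ h ∈ H, hact h u = u) (F : MvPolynomial (Fin n × c) k) :
    rey H (u * F) = u * rey H (F) := by
  unfold rey
  rw [Finset.sum_congr rfl (fun h _ => by rw [map_mul, hu h.1 h.2]), ← Finset.mul_sum,
    mul_smul_comm]

theorem rey_csub {c1 c2 : Type*} [Fintype c1] [Fintype c2] (M : Matrix c1 c2 k)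
    (F : MvPolynomial (Fin n × c2) k) : csub M (rey H F) = rey H (csub M F) := by
  unfold rey
  rw [map_smul, map_sum]
  congr 1
  exact Finset.sum_congr rfl fun h _ => (hact_csub _ _ _).symm

theorem rey_smul {c : Type*} [Fintype c] (a : k) (F : MvPolynomial (Fin n × c) k) :
    rey H (a • F) = a • rey H F := by
  rw [smul_eq_C_mul, rey_C_mul, ← smul_eq_C_mul]

theorem rey_sum {c : Type*} [Fintype c] {ι : Type*} (s : Finset ι)
    (f : ι → MvPolynomial (Fin n × c) k) : rey H (∑ i ∈ s, f i) = ∑ i ∈ s, rey H (f i) := by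
  unfold rey
  simp only [map_sum, Finset.smul_sum]
  rw [Finset.sum_comm]

end Rey

section Arith

variable {p : ℕ} [CharP k p]

theorem cast_ne_zero_of_lt {a : ℕ} (ha : 0 < a) (hap : a < p) : (a : k) ≠ 0 := by
  intro h
  rw [CharP.cast_eq_zero_iff k p] at h
  exact absurd (Nat.le_of_dvd ha h) (not_le.2 hap)

theorem cast_factorial_ne_zero (hp : p.Prime) {a : ℕ} (hap : a < p) : ((a.factorial : ℕ) : k) ≠ 0 := by
  intro h
  rw [CharP.cast_eq_zero_iff k p] at h
  exact absurd ((Nat.Prime.dvd_factorial hp).1 h) (not_le.2 hap)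

theorem cast_ne_zero_of_dvd_factorial (hp : p.Prime) {a b : ℕ} (hap : a < p) (hb : b ∣ a.factorial) :
    ((b : ℕ) : k) ≠ 0 := by
  intro h
  rw [CharP.cast_eq_zero_iff k p] at h
  exact absurd ((Nat.Prime.dvd_factorial hp).1 (h.trans hb)) (not_le.2 hap)

end Arith

section Extract

/-- Zariski-density extraction: if a polynomial (in `a`) family of vectors lies in a submodule
`U` for all `a` outside the zero-set of `ψ ≠ 0`, then all "coefficient" vectors lie in `U`. -/
theorem extract [Infinite k] {ι : Type*} [Fintype ι] [DecidableEq ι] {M : Type*} [AddCommGroup M] [Module k M]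
    (U : Submodule k M) {T : Type*} (s : Finset T) (β : T → (ι →₀ ℕ))
    (hβ : Set.InjOn β s) (w : T → M) (ψ : MvPolynomial ι k) (hψ : ψ ≠ 0)
    (hU : ∀ a : ι → k, eval a ψ ≠ 0 → (∑ t ∈ s, (∏ i, (a i) ^ (β t i)) • w t) ∈ U) :
    ∀ t ∈ s, w t ∈ U := by
  intro t0 ht0
  have hq : ∀ φ : Module.Dual k (M ⧸ U), φ (U.mkQ (w t0)) = 0 := by
    intro φ
    set g : MvPolynomial ι k :=
      ∑ t ∈ s, C (φ (U.mkQ (w t))) * monomial (β t) (1 : k) with hgdef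
    have hgψ : g * ψ = 0 := by
      apply MvPolynomial.funext
      intro x
      rw [map_zero, map_mul]
      by_cases hx : eval x ψ = 0
      · rw [hx, mul_zero]
      · have hmem := hU x hx
        have hg0 : eval x g = 0 := by
          have h2 : eval x g = φ (U.mkQ (∑ t ∈ s, (∏ i, (x i) ^ (β t i)) • w t)) := by
            rw [hgdef, map_sum, map_sum, map_sum]
            refine Finset.sum_congr rfl fun t _ => ?_
            rw [map_mul, eval_C, eval_monomial, one_mul, Finsupp.prod_pow, map_smul, map_smul,
              smul_eq_mul, mul_comm]
          rw [h2, show U.mkQ (∑ t ∈ s, (∏ i, (x i) ^ (β t i)) • w t) = 0 from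
            (Submodule.Quotient.mk_eq_zero U).2 hmem, map_zero]
        rw [hg0, zero_mul]
    have hg : g = 0 := by
      rcases mul_eq_zero.1 hgψ with h | h
      · exact h
      · exact absurd h hψ
    have hcoeff := congrArg (coeff (β t0)) hg
    rw [coeff_zero, hgdef, coeff_sum] at hcoeff
    rw [Finset.sum_eq_single t0 (fun t ht hne => ?_) (fun h => absurd ht0 h)] at hcoeff
    · rw [coeff_C_mul, coeff_monomial, if_pos rfl, mul_one] at hcoeff
      exact hcoeff
    · rw [coeff_C_mul, coeff_monomial, if_neg (fun hEq => hne (hβ ht ht0 hEq)), mul_zero]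
  have := (Module.forall_dual_apply_eq_zero_iff k (U.mkQ (w t0))).mp hq
  rwa [Submodule.mkQ_apply, Submodule.Quotient.mk_eq_zero] at this

end Extract

section Polarize
open Finset

theorem sum_ite_subsets {A : Type*} [CommRing A] {N : ℕ} (T : Finset (Fin N)) :
    ∑ S : Finset (Fin N), (if T ⊆ S then ((-1 : A) ^ (N - S.card)) else 0)
      = if T = Finset.univ then 1 else 0 := by
  classical
  rw [← Finset.sum_filter]
  have hdisj : ∀ S' ∈ Tᶜ.powerset, Disjoint S' T := by
    intro S' hS'
    rw [Finset.mem_powerset] at hS'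
    exact Finset.disjoint_left.2 fun a ha => by
      have := hS' ha; rw [Finset.mem_compl] at this; exact this
  have hbij : ∑ S ∈ Finset.univ.filter (fun S => T ⊆ S), ((-1 : A) ^ (N - S.card))
      = ∑ S' ∈ Tᶜ.powerset, ((-1 : A) ^ (N - (S' ∪ T).card)) := by
    refine Finset.sum_bij' (fun S _ => S \ T) (fun S' _ => S' ∪ T) ?_ ?_ ?_ ?_ ?_
    · intro S hS
      rw [Finset.mem_powerset]
      intro x hx
      rw [Finset.mem_sdiff] at hx
      rw [Finset.mem_compl]
      exact hx.2
    · intro S' hS'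
      rw [Finset.mem_filter]
      exact ⟨Finset.mem_univ _, Finset.subset_union_right⟩
    · intro S hS
      rw [Finset.mem_filter] at hS
      show S \ T ∪ T = S
      rw [Finset.sdiff_union_of_subset hS.2]
    · intro S' hS'
      show (S' ∪ T) \ T = S'
      rw [Finset.union_sdiff_right, Finset.sdiff_eq_self_iff_disjoint]
      exact hdisj S' hS'
    · intro S hS
      rw [Finset.mem_filter] at hS
      show ((-1 : A) ^ (N - S.card)) = (-1 : A) ^ (N - (S \ T ∪ T).card)
      rw [Finset.sdiff_union_of_subset hS.2]
  rw [hbij]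
  have h3 : T.card ≤ N := by
    simpa using Finset.card_le_card (Finset.subset_univ T)
  have hM : ∀ S' ∈ Tᶜ.powerset, (-1 : A) ^ (N - (S' ∪ T).card)
      = (-1 : A) ^ (N - T.card) * (-1 : A) ^ S'.card := by
    intro S' hS'
    have h1 : S'.card ≤ Tᶜ.card := Finset.card_le_card (Finset.mem_powerset.1 hS')
    have h2 : Tᶜ.card = N - T.card := by
      rw [Finset.card_compl, Fintype.card_fin]
    have hc : (S' ∪ T).card = S'.card + T.card :=
      Finset.card_union_of_disjoint (hdisj S' hS')
    have h4 : N - (S' ∪ T).card = (N - T.card) - S'.card := by omega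
    have h5 : S'.card ≤ N - T.card := by omega
    have sq : (-1 : A) ^ S'.card * (-1 : A) ^ S'.card = 1 := by
      rw [← pow_add]
      exact Even.neg_one_pow ⟨S'.card, by ring⟩
    calc (-1 : A) ^ (N - (S' ∪ T).card)
        = (-1 : A) ^ ((N - T.card) - S'.card) * ((-1 : A) ^ S'.card * (-1 : A) ^ S'.card) := by
          rw [sq, mul_one, h4]
      _ = (-1 : A) ^ (N - T.card) * (-1 : A) ^ S'.card := by
          rw [← mul_assoc, ← pow_add]
          congr 2
          omega
  rw [Finset.sum_congr rfl hM, ← Finset.mul_sum]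
  have hz : ∑ S' ∈ Tᶜ.powerset, ((-1 : A) ^ S'.card)
      = if Tᶜ = ∅ then 1 else 0 := by
    have := Finset.sum_powerset_neg_one_pow_card (x := Tᶜ)
    have hA := congrArg (Int.cast : ℤ → A) this
    push_cast at hA
    simpa using hA
  rw [hz]
  by_cases hT : T = Finset.univ
  · rw [if_pos hT, if_pos (by rw [hT, Finset.compl_univ]), hT]
    simp
  · rw [if_neg hT, if_neg (fun h => hT (by rwa [Finset.compl_eq_empty_iff] at h)), mul_zero]

/-- the perm-count: functions `Fin N → Fin N` with full image are the `N !` bijections. -/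
theorem card_filter_surj (N : ℕ) :
    (Finset.univ.filter fun g : Fin N → Fin N => Finset.image g Finset.univ = Finset.univ).card
      = N.factorial := by
  classical
  have he : {g : Fin N → Fin N // Finset.image g Finset.univ = Finset.univ}
      ≃ Equiv.Perm (Fin N) := by
    refine
      { toFun := fun g => Equiv.ofBijective g.1 ?_
        invFun := fun σ => ⟨σ, ?_⟩
        left_inv := fun g => Subtype.ext rfl
        right_inv := fun σ => Equiv.ext fun x => rfl }
    · have hsurj : Function.Surjective g.1 := by
        intro y
        have : y ∈ Finset.image g.1 Finset.univ := by rw [g.2]; exact Finset.mem_univ y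
        rcases Finset.mem_image.1 this with ⟨x, _, hx⟩
        exact ⟨x, hx⟩
      exact Finite.surjective_iff_bijective.1 hsurj
    · ext y
      simp only [Finset.mem_image, Finset.mem_univ, true_and, iff_true]
      exact ⟨σ.symm y, σ.apply_symm_apply y⟩
  calc (Finset.univ.filter fun g : Fin N → Fin N =>
        Finset.image g Finset.univ = Finset.univ).card
      = Fintype.card {g : Fin N → Fin N // Finset.image g Finset.univ = Finset.univ} :=
        (Fintype.card_subtype _).symm
    _ = Fintype.card (Equiv.Perm (Fin N)) := Fintype.card_congr he
    _ = (Fintype.card (Fin N)).factorial := Fintype.card_perm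
    _ = N.factorial := by rw [Fintype.card_fin]

theorem polarization {A : Type*} [CommRing A] (N : ℕ) (f : Fin N → A) :
    ∑ S : Finset (Fin N), (-1 : A) ^ (N - S.card) * (∑ j ∈ S, f j) ^ N
      = (N.factorial : A) * ∏ j, f j := by
  classical
  have hpow : ∀ S : Finset (Fin N), (∑ j ∈ S, f j) ^ N
      = ∑ g ∈ Fintype.piFinset (fun _ : Fin N => S), ∏ j, f (g j) := by
    intro S
    rw [show (∑ j ∈ S, f j) ^ N = ∏ _j : Fin N, (∑ j ∈ S, f j) by
      rw [Finset.prod_const, Finset.card_univ, Fintype.card_fin]]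
    exact Finset.prod_univ_sum _ _
  have hfil : ∀ S : Finset (Fin N), Fintype.piFinset (fun _ : Fin N => S)
      = (Finset.univ : Finset (Fin N → Fin N)).filter fun g => Finset.image g Finset.univ ⊆ S := by
    intro S
    ext g
    simp [Fintype.mem_piFinset, Finset.image_subset_iff]
  calc ∑ S : Finset (Fin N), (-1 : A) ^ (N - S.card) * (∑ j ∈ S, f j) ^ N
      = ∑ S : Finset (Fin N), ∑ g : Fin N → Fin N,
          (if Finset.image g Finset.univ ⊆ S then (-1 : A) ^ (N - S.card) else 0)
            * ∏ j, f (g j) := by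
        refine Finset.sum_congr rfl fun S _ => ?_
        rw [hpow S, hfil S, Finset.mul_sum, Finset.sum_filter]
        exact Finset.sum_congr rfl fun g _ => by rw [ite_mul, zero_mul]
    _ = ∑ g : Fin N → Fin N,
          (if Finset.image g Finset.univ = Finset.univ then (1 : A) else 0) * ∏ j, f (g j) := by
        rw [Finset.sum_comm]
        refine Finset.sum_congr rfl fun g _ => ?_
        rw [← Finset.sum_mul, sum_ite_subsets]
    _ = ∑ g ∈ Finset.univ.filter (fun g : Fin N → Fin N =>
          Finset.image g Finset.univ = Finset.univ), ∏ j, f (g j) := by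
        rw [Finset.sum_filter]
        exact Finset.sum_congr rfl fun g _ => by
          by_cases hg : Finset.image g Finset.univ = Finset.univ
          · rw [if_pos hg, if_pos hg, one_mul]
          · rw [if_neg hg, if_neg hg, zero_mul]
    _ = ∑ g ∈ Finset.univ.filter (fun g : Fin N → Fin N =>
          Finset.image g Finset.univ = Finset.univ), ∏ j, f j := by
        refine Finset.sum_congr rfl fun g hg => ?_
        rw [Finset.mem_filter] at hg
        have hsurj : Function.Surjective g := by
          intro y
          have : y ∈ Finset.image g Finset.univ := by rw [hg.2]; exact Finset.mem_univ y
          rcases Finset.mem_image.1 this with ⟨x, _, hx⟩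
          exact ⟨x, hx⟩
        exact Function.Bijective.prod_comp (Finite.surjective_iff_bijective.1 hsurj) f
    _ = (N.factorial : A) * ∏ j, f j := by
        rw [Finset.sum_const, card_filter_surj, nsmul_eq_mul]

end Polarize

section Degree

variable {σ : Type*}

theorem totalDegree_multiset_sum_le (s : Multiset (MvPolynomial σ k)) {m : ℕ}
    (h : ∀ x ∈ s, MvPolynomial.totalDegree x ≤ m) : s.sum.totalDegree ≤ m := by
  induction s using Multiset.induction_on with
  | empty => simp
  | cons a t ih =>
    rw [Multiset.sum_cons]
    refine (totalDegree_add _ _).trans (max_le (h a (Multiset.mem_cons_self a t)) ?_)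
    exact ih fun x hx => h x (Multiset.mem_cons_of_mem hx)

theorem multiset_sum_nat_le (t : Multiset (MvPolynomial σ k)) {m : ℕ}
    (h : ∀ x ∈ t, MvPolynomial.totalDegree x ≤ m) :
    (t.map MvPolynomial.totalDegree).sum ≤ Multiset.card t * m := by
  induction t using Multiset.induction_on with
  | empty => simp
  | cons a u ih =>
    rw [Multiset.map_cons, Multiset.sum_cons, Multiset.card_cons]
    have := ih fun x hx => h x (Multiset.mem_cons_of_mem hx)
    have ha := h a (Multiset.mem_cons_self a u)
    calc a.totalDegree + (u.map MvPolynomial.totalDegree).sum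
        ≤ m + Multiset.card u * m := Nat.add_le_add ha this
      _ = (Multiset.card u + 1) * m := by ring

theorem totalDegree_esymm_le (s : Multiset (MvPolynomial σ k))
    (h : ∀ x ∈ s, MvPolynomial.totalDegree x ≤ 1) (j : ℕ) :
    (Multiset.esymm s j).totalDegree ≤ j := by
  rw [Multiset.esymm]
  refine totalDegree_multiset_sum_le _ ?_
  intro x hx
  rw [Multiset.mem_map] at hx
  obtain ⟨t, ht, rfl⟩ := hx
  rw [Multiset.mem_powersetCard] at ht
  refine (totalDegree_multiset_prod t).trans ?_
  calc (t.map MvPolynomial.totalDegree).sum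
      ≤ Multiset.card t * 1 := multiset_sum_nat_le t fun x hx => h x (Multiset.mem_of_le ht.1 hx)
    _ = j := by rw [mul_one, ht.2]

theorem totalDegree_subst_le {τ : Type*} (φ : σ → MvPolynomial τ k)
    (hφ : ∀ i, (φ i).totalDegree ≤ 1) (F : MvPolynomial σ k) :
    (aeval φ F).totalDegree ≤ F.totalDegree := by
  conv_lhs => rw [F.as_sum]
  rw [map_sum]
  refine totalDegree_finset_sum _ _ |>.trans ?_
  refine Finset.sup_le fun ν hν => ?_
  rw [aeval_monomial]
  refine (totalDegree_mul _ _).trans ?_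
  have h1 : (algebraMap k (MvPolynomial τ k) (coeff ν F)).totalDegree = 0 := totalDegree_C _
  rw [h1, zero_add]
  refine (totalDegree_finset_prod _ _).trans ?_
  calc ∑ i ∈ ν.support, ((φ i) ^ ν i).totalDegree
      ≤ ∑ i ∈ ν.support, ν i := by
        refine Finset.sum_le_sum fun i _ => ?_
        calc ((φ i) ^ ν i).totalDegree ≤ ν i * (φ i).totalDegree := totalDegree_pow _ _
          _ ≤ ν i * 1 := Nat.mul_le_mul_left _ (hφ i)
          _ = ν i := mul_one _
    _ ≤ F.totalDegree := by
        rw [show ∑ i ∈ ν.support, ν i = ν.sum fun _ e => e from rfl]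
        exact le_totalDegree hν

theorem totalDegree_hact_le {c : Type*} [Fintype c] (h : GL (Fin n) k)
    (F : MvPolynomial (Fin n × c) k) : (hact h F).totalDegree ≤ F.totalDegree := by
  refine totalDegree_subst_le _ (fun i => ?_) F
  refine (totalDegree_finset_sum _ _).trans ?_
  refine Finset.sup_le fun s _ => ?_
  refine (totalDegree_mul _ _).trans ?_
  rw [totalDegree_C, totalDegree_X]

end Degree

section Noether

variable {H : Subgroup (GL (Fin n) k)} [Fintype ↥H]

theorem pow_card_eq_neg_sum {c : Type*} [Fintype c] (b : MvPolynomial (Fin n × c) k) :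
    ∃ e : ℕ → MvPolynomial (Fin n × c) k,
      (∀ j, ∀ h ∈ H, hact h (e j) = e j) ∧
      (b.totalDegree ≤ 1 → ∀ j, (e j).totalDegree ≤ Fintype.card ↥H) ∧
      b ^ (Fintype.card ↥H)
        = -∑ j ∈ Finset.range (Fintype.card ↥H), e j * b ^ j := by
  classical
  set N := Fintype.card ↥H with hN
  set P : Polynomial (MvPolynomial (Fin n × c) k) :=
    ∏ h : ↥H, (Polynomial.X - Polynomial.C (hact (h : GL (Fin n) k) b)) with hP
  have hmonic : P.Monic :=
    Polynomial.monic_prod_of_monic _ _ fun _ _ => Polynomial.monic_X_sub_C _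
  have hdeg : P.natDegree = N := by
    rw [hP, Polynomial.natDegree_prod_of_monic _ _ fun _ _ => Polynomial.monic_X_sub_C _]
    simp [Polynomial.natDegree_X_sub_C, hN, Finset.card_univ]
  have heval : Polynomial.eval b P = 0 := by
    rw [hP, Polynomial.eval_prod]
    refine Finset.prod_eq_zero (Finset.mem_univ (1 : ↥H)) ?_
    rw [Polynomial.eval_sub, Polynomial.eval_X, Polynomial.eval_C, OneMemClass.coe_one,
      hact_one, sub_self]
  refine ⟨fun j => P.coeff j, ?_, ?_, ?_⟩
  · intro j h hh
    show (hact h) (P.coeff j) = P.coeff j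
    have hmap : P.map ((hact (c := c) h : MvPolynomial (Fin n × c) k →ₐ[k] _) :
        MvPolynomial (Fin n × c) k →+* MvPolynomial (Fin n × c) k) = P := by
      rw [hP, Polynomial.map_prod]
      calc ∏ h' : ↥H, ((Polynomial.X - Polynomial.C (hact (h' : GL (Fin n) k) b)).map
            ((hact (c := c) h : MvPolynomial (Fin n × c) k →ₐ[k] _) :
              MvPolynomial (Fin n × c) k →+* MvPolynomial (Fin n × c) k))
          = ∏ h' : ↥H, (Polynomial.X
              - Polynomial.C (hact ((⟨h, hh⟩ : ↥H) * h' : ↥H) b)) := by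
            refine Finset.prod_congr rfl fun h' _ => ?_
            rw [Polynomial.map_sub, Polynomial.map_X, Polynomial.map_C]
            congr 1
            show Polynomial.C (hact h (hact (h' : GL (Fin n) k) b)) = _
            rw [hact_hact]
            rfl
        _ = P := by
            rw [hP]
            exact Fintype.prod_equiv (Equiv.mulLeft (⟨h, hh⟩ : ↥H)) _ _ fun h' => rfl
    conv_rhs => rw [← hmap]
    rw [Polynomial.coeff_map]
    rfl
  · intro hb j
    show (P.coeff j).totalDegree ≤ N
    by_cases hj : j ≤ N
    · set s : Multiset (MvPolynomial (Fin n × c) k) :=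
        Finset.univ.val.map (fun h : ↥H => hact (h : GL (Fin n) k) b) with hs
      have hcard : Multiset.card s = N := by simp [hs, hN]
      have hPs : P = (s.map fun t => Polynomial.X - Polynomial.C t).prod := by
        rw [hP, Finset.prod_eq_multiset_prod, hs, Multiset.map_map]
        rfl
      have hco := Multiset.prod_X_sub_C_coeff s (k := j) (by rw [hcard]; exact hj)
      rw [hPs, hco, hcard]
      refine (totalDegree_mul _ _).trans ?_
      have h1 : ((-1 : MvPolynomial (Fin n × c) k) ^ (N - j)).totalDegree = 0 := by
        refine Nat.le_zero.1 ?_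
        refine (totalDegree_pow _ _).trans ?_
        rw [totalDegree_neg, totalDegree_one, mul_zero]
      rw [h1, zero_add]
      refine (totalDegree_esymm_le s ?_ (N - j)).trans (Nat.sub_le _ _)
      intro x hx
      rw [hs, Multiset.mem_map] at hx
      obtain ⟨h', _, rfl⟩ := hx
      exact (totalDegree_hact_le _ _).trans hb
    · show (P.coeff j).totalDegree ≤ N
      rw [Polynomial.coeff_eq_zero_of_natDegree_lt (by rw [hdeg]; exact Nat.lt_of_not_le hj)]
      simp
  · have hlead : P.coeff N = 1 := by rw [← hdeg]; exact hmonic.coeff_natDegree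
    have hsum := Polynomial.eval_eq_sum_range (p := P) b
    rw [heval, hdeg, Finset.sum_range_succ, hlead, one_mul] at hsum
    exact eq_neg_of_add_eq_zero_right hsum.symm

end Noether

section DetPoly

/-- determinant of the top `n × n` block, as a polynomial in the `d × n` matrix entries. -/
noncomputable def detPoly (hnd : n ≤ d) : MvPolynomial (Fin d × Fin n) k :=
  (Matrix.of fun i j : Fin n => (X (Fin.castLE hnd i, j) : MvPolynomial (Fin d × Fin n) k)).det

theorem eval_detPoly (hnd : n ≤ d) (a : Fin d × Fin n → k) :
    eval a (detPoly hnd) = (Matrix.of fun i j : Fin n => a (Fin.castLE hnd i, j)).det := by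
  rw [detPoly, RingHom.map_det, RingHom.mapMatrix_apply]
  congr 1
  ext i j
  simp [Matrix.map_apply]

theorem detPoly_ne_zero (hnd : n ≤ d) : (detPoly (k := k) hnd) ≠ 0 := by
  intro h0
  have hthis := eval_detPoly hnd (fun pr => if (pr.1 : ℕ) = (pr.2 : ℕ) then (1 : k) else 0)
  rw [h0, map_zero] at hthis
  have h1 : (Matrix.of fun i j : Fin n =>
      (if ((Fin.castLE hnd i : Fin d) : ℕ) = ((j : Fin n) : ℕ) then (1 : k) else 0))
      = (1 : Matrix (Fin n) (Fin n) k) := by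
    ext i j
    simp only [Matrix.of_apply, Matrix.one_apply, Fin.coe_castLE]
    by_cases hij : i = j
    · rw [if_pos (by rw [hij]), if_pos hij]
    · rw [if_neg (fun hc => hij (Fin.ext hc)), if_neg hij]
  rw [h1, Matrix.det_one] at hthis
  exact one_ne_zero hthis.symm

theorem csub_mem_polarized (hnd : n ≤ d) (H : Subgroup (GL (Fin n) k))
    (A : Matrix (Fin d) (Fin n) k)
    (hA : (Matrix.of fun i j : Fin n => A (Fin.castLE hnd i) j).det ≠ 0)
    {f : MvPolynomial (Fin n × Fin n) k} (hf : f ∈ HinvAlg (d := n) H) :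
    csub A f ∈ polarized hnd H := by
  classical
  set e : Fin n ⊕ Fin (d - n) ≃ Fin d :=
    finSumFinEquiv.trans (finCongr (Nat.add_sub_cancel' hnd)) with he
  set B : Matrix (Fin n) (Fin n) k := Matrix.of fun i j => A (Fin.castLE hnd i) j with hB
  set D : Matrix (Fin (d - n)) (Fin n) k := Matrix.of fun i j => A (e (Sum.inr i)) j with hD
  set gM : Matrix (Fin d) (Fin d) k :=
    Matrix.reindex e e (Matrix.fromBlocks B 0 D 1) with hgMdef
  have hdet : gM.det ≠ 0 := by
    rw [hgMdef, Matrix.det_reindex_self, Matrix.det_fromBlocks_zero₁₂, Matrix.det_one, mul_one]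
    exact hA
  set g : GL (Fin d) k := Matrix.GeneralLinearGroup.mkOfDetNeZero gM hdet with hg
  have hgval : (g : Matrix (Fin d) (Fin d) k) = gM := rfl
  have hinl : ∀ i : Fin n, e (Sum.inl i) = Fin.castLE hnd i := by
    intro i
    apply Fin.ext
    simp [he, finSumFinEquiv]
  have hgM : ∀ (q : Fin d) (c : Fin n), gM q (Fin.castLE hnd c) = A q c := by
    intro q c
    have hc : e.symm (Fin.castLE hnd c) = Sum.inl c := by
      rw [← hinl c, Equiv.symm_apply_apply]
    rw [show gM q (Fin.castLE hnd c)
        = (Matrix.fromBlocks B 0 D 1) (e.symm q) (e.symm (Fin.castLE hnd c)) from rfl, hc]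
    rcases hsq : e.symm q with i | i
    · have hq : q = e (Sum.inl i) := by rw [← hsq, Equiv.apply_symm_apply]
      rw [hq, hinl i]
      rfl
    · have hq : q = e (Sum.inr i) := by rw [← hsq, Equiv.apply_symm_apply]
      rw [hq]
      rfl
  have hAg : (g : Matrix (Fin d) (Fin d) k) * jMat (k := k) hnd = A := by
    ext q c
    rw [Matrix.mul_apply, hgval]
    simp only [jMat, mul_ite, mul_one, mul_zero]
    rw [Finset.sum_ite_eq' Finset.univ (Fin.castLE hnd c) (fun s => gM q s),
      if_pos (Finset.mem_univ _)]
    exact hgM q c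
  have hkey : csub A f = colAct g (jmap hnd f) := by
    rw [colAct_eq_csub, jmap_eq_csub, csub_csub, hAg]
  rw [hkey]
  exact Algebra.subset_adjoin ⟨g, f, hf, rfl⟩

theorem prod_X_pow_eq_monomial'' {σ : Type*} [Fintype σ] (f : σ → ℕ) :
    (∏ v : σ, (X v : MvPolynomial σ k) ^ f v)
      = monomial (Finsupp.equivFunOnFinite.symm f) 1 := by
  classical
  rw [monomial_eq, C_1, one_mul, Finsupp.prod]
  refine (Finset.prod_subset (Finset.subset_univ _) ?_).symm
  intro x _ hx
  rw [show f x = (Finsupp.equivFunOnFinite.symm f) x from rfl,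
    Finsupp.notMem_support_iff.1 hx, pow_zero]

end DetPoly

section SmallCase

variable {p : ℕ} [CharP k p] [Infinite k]

theorem rey_monomial_mem_small (hnd : n ≤ d) (hp : p.Prime)
    (H : Subgroup (GL (Fin n) k)) [Fintype ↥H] (hcard : Nat.card ↥H < p)
    (ν : (Fin n × Fin d) →₀ ℕ) (hν : (ν.sum fun _ e => e) ≤ Nat.card ↥H) :
    rey H (monomial ν 1) ∈ polarized hnd H := by
  classical
  set N := Nat.card ↥H with hNdef
  set a : Fin n → ℕ := fun i => ∑ q : Fin d, ν (i, q) with hadef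
  have hsum_eq : (ν.sum fun _ e => e) = ∑ pr : Fin n × Fin d, ν pr :=
    Finsupp.sum_fintype _ _ fun _ => rfl
  have hai : ∀ i, a i ≤ N := by
    intro i
    refine le_trans ?_ hν
    rw [hsum_eq, Fintype.sum_prod_type]
    exact Finset.single_le_sum (f := fun i => ∑ q : Fin d, ν (i, q))
      (fun _ _ => Finset.sum_nonneg fun _ _ => Nat.zero_le _) (Finset.mem_univ i)
  set μ : MvPolynomial (Fin n × Fin n) k :=
    ∏ i : Fin n, (X (i, i) : MvPolynomial (Fin n × Fin n) k) ^ (a i) with hμdef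
  set T : Finset (Fin n → Fin d → ℕ) :=
    Fintype.piFinset (fun i : Fin n => Finset.piAntidiag Finset.univ (a i)) with hTdef
  set exps : (Fin n → Fin d → ℕ) → ((Fin n × Fin d) →₀ ℕ) :=
    fun κ => Finsupp.equivFunOnFinite.symm (fun pr => κ pr.1 pr.2) with hexpsdef
  set coefm : (Fin n → Fin d → ℕ) → k :=
    fun κ => ∏ i, ((Nat.multinomial Finset.univ (κ i)) : k) with hcoefmdef
  -- the key expansion
  have hμA : ∀ A : Matrix (Fin d) (Fin n) k, csub A μ
      = ∑ κ ∈ T, C ((∏ pr : Fin d × Fin n, (A pr.1 pr.2) ^ (κ pr.2 pr.1)) * coefm κ)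
          * monomial (exps κ) 1 := by
    intro A
    calc csub A μ
        = ∏ i, (∑ q : Fin d, X (i, q) * C (A q i)) ^ (a i) := by
          rw [hμdef, map_prod]
          exact Finset.prod_congr rfl fun i _ => by rw [map_pow, csub_X]
      _ = ∏ i, ∑ κi ∈ Finset.piAntidiag Finset.univ (a i),
            ((Nat.multinomial Finset.univ κi : MvPolynomial (Fin n × Fin d) k) *
              ∏ q, (X (i, q) * C (A q i)) ^ κi q) := by
          exact Finset.prod_congr rfl fun i _ => Finset.sum_pow_eq_sum_piAntidiag _ _ _
      _ = ∑ κ ∈ T, ∏ i, ((Nat.multinomial Finset.univ (κ i) : MvPolynomial (Fin n × Fin d) k) *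
            ∏ q, (X (i, q) * C (A q i)) ^ (κ i q)) := Finset.prod_univ_sum _ _
      _ = ∑ κ ∈ T, C ((∏ pr : Fin d × Fin n, (A pr.1 pr.2) ^ (κ pr.2 pr.1)) * coefm κ)
            * monomial (exps κ) 1 := by
          refine Finset.sum_congr rfl fun κ _ => ?_
          have hPi : ∀ i, (∏ q, (X (i, q) * C (A q i)) ^ (κ i q))
              = (∏ q, (X (i, q) : MvPolynomial (Fin n × Fin d) k) ^ (κ i q))
                * C (∏ q, (A q i) ^ (κ i q)) := by
            intro i
            rw [map_prod]
            rw [← Finset.prod_mul_distrib]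
            exact Finset.prod_congr rfl fun q _ => by rw [mul_pow, map_pow]
          rw [Finset.prod_congr rfl fun i _ => by rw [hPi i]]
          rw [Finset.prod_mul_distrib, Finset.prod_mul_distrib]
          have h1 : (∏ i, (Nat.multinomial Finset.univ (κ i)
              : MvPolynomial (Fin n × Fin d) k)) = C (coefm κ) := by
            rw [hcoefmdef, map_prod]
            exact Finset.prod_congr rfl fun i _ => by rw [map_natCast]
          have h2 : (∏ i, ∏ q, (X (i, q) : MvPolynomial (Fin n × Fin d) k) ^ (κ i q))
              = monomial (exps κ) 1 := by
            rw [← Fintype.prod_prod_type (f := fun pr : Fin n × Fin d =>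
              (X pr : MvPolynomial (Fin n × Fin d) k) ^ (κ pr.1 pr.2))]
            exact prod_X_pow_eq_monomial'' _
          have h3 : (∏ i, (C (∏ q, (A q i) ^ (κ i q)) : MvPolynomial (Fin n × Fin d) k))
              = (C (∏ pr : Fin d × Fin n, (A pr.1 pr.2) ^ (κ pr.2 pr.1))
                  : MvPolynomial (Fin n × Fin d) k) := by
            rw [← map_prod]
            congr 1
            rw [Fintype.prod_prod_type (f := fun pr : Fin d × Fin n =>
              (A pr.1 pr.2) ^ (κ pr.2 pr.1))]
            exact (Finset.prod_comm).symm
          rw [h1, h2, h3, map_mul]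
          ring
  -- invariance of `rey H μ`
  have hμinv : rey H μ ∈ HinvAlg (d := n) H := fun h hh => hact_rey hh μ
  -- extraction
  have hext := extract (k := k) (ι := Fin d × Fin n)
    (Subalgebra.toSubmodule (polarized hnd H)) T
    (fun κ => Finsupp.equivFunOnFinite.symm (fun pr : Fin d × Fin n => κ pr.2 pr.1))
    (fun κ _ κ' _ h => by
      funext i q
      have := congrArg (fun F => (F : (Fin d × Fin n) →₀ ℕ) (q, i)) h
      exact this)
    (fun κ => coefm κ • rey H (monomial (exps κ) 1))
    (detPoly hnd) (detPoly_ne_zero hnd) ?_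
  · -- apply to κ₀
    set κ0 : Fin n → Fin d → ℕ := fun i q => ν (i, q) with hκ0def
    have hκ0T : κ0 ∈ T := by
      rw [hTdef, Fintype.mem_piFinset]
      intro i
      rw [Finset.mem_piAntidiag]
      exact ⟨rfl, fun q _ => Finset.mem_univ q⟩
    have hw : coefm κ0 • rey H (monomial (exps κ0) 1)
        ∈ Subalgebra.toSubmodule (polarized hnd H) := hext κ0 hκ0T
    have hcm : coefm κ0 ≠ 0 := by
      rw [hcoefmdef]
      refine Finset.prod_ne_zero_iff.2 fun i _ => ?_
      refine cast_ne_zero_of_dvd_factorial hp (lt_of_le_of_lt (hai i) hcard) ?_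
      exact ⟨∏ q ∈ Finset.univ, ((κ0 i) q).factorial,
        by rw [← Nat.multinomial_spec Finset.univ (κ0 i)]; ring⟩
    have hexps0 : exps κ0 = ν := by
      ext pr
      show ν (pr.1, pr.2) = ν pr
      rw [Prod.mk.eta]
    have : rey H (monomial ν 1) ∈ Subalgebra.toSubmodule (polarized hnd H) := by
      have h2 := Submodule.smul_mem _ (coefm κ0)⁻¹ hw
      rw [smul_smul, inv_mul_cancel₀ hcm, one_smul, hexps0] at h2
      exact h2
    exact this
  · -- the membership hypothesis for the extraction
    intro z hz
    set A : Matrix (Fin d) (Fin n) k := Matrix.of fun q i => z (q, i) with hAdef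
    have hdet : (Matrix.of fun i j : Fin n => A (Fin.castLE hnd i) j).det ≠ 0 := by
      rw [eval_detPoly hnd z] at hz
      exact hz
    have hmem : csub A (rey H μ) ∈ polarized hnd H :=
      csub_mem_polarized hnd H A hdet hμinv
    rw [rey_csub, hμA A, rey_sum] at hmem
    have heq : ∑ κ ∈ T, rey H (C ((∏ pr : Fin d × Fin n, (A pr.1 pr.2) ^ (κ pr.2 pr.1))
          * coefm κ) * monomial (exps κ) 1)
        = ∑ κ ∈ T, (∏ i : Fin d × Fin n, (z i) ^
            ((Finsupp.equivFunOnFinite.symm (fun pr : Fin d × Fin n => κ pr.2 pr.1)) i)) •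
          (coefm κ • rey H (monomial (exps κ) 1)) := by
      refine Finset.sum_congr rfl fun κ _ => ?_
      rw [rey_C_mul, ← smul_eq_C_mul, mul_smul]
      rfl
    rw [heq] at hmem
    exact hmem

end SmallCase

section Key

variable {p : ℕ}

theorem rey_neg {H : Subgroup (GL (Fin n) k)} [Fintype ↥H] {c : Type*} [Fintype c]
    (F : MvPolynomial (Fin n × c) k) : rey H (-F) = - rey H F := by
  unfold rey
  rw [Finset.sum_congr rfl fun h _ => map_neg _ F, Finset.sum_neg_distrib, smul_neg]

theorem exists_list_of_monomial (ν : (Fin n × Fin d) →₀ ℕ) :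
    ∃ L : List (Fin n × Fin d), L.length = (ν.sum fun _ e => e) ∧
      (L.map (fun v => (X v : MvPolynomial (Fin n × Fin d) k))).prod = monomial ν 1 := by
  classical
  induction ν using Finsupp.induction with
  | zero => exact ⟨[], by simp, by simp [monomial_eq]⟩
  | single_add a e ν ha he ih =>
    obtain ⟨L, hL1, hL2⟩ := ih
    refine ⟨List.replicate e a ++ L, ?_, ?_⟩
    · rw [List.length_append, List.length_replicate, hL1,
        Finsupp.sum_add_index' (fun _ => rfl) (fun _ _ _ => rfl), Finsupp.sum_single_index rfl]
    · rw [List.map_append, List.prod_append, List.map_replicate, List.prod_replicate, hL2,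
        X_pow_eq_monomial, monomial_mul, one_mul]

theorem rey_poly_mem (hnd : n ≤ d) {H : Subgroup (GL (Fin n) k)} [Fintype ↥H]
    {F : MvPolynomial (Fin n × Fin d) k}
    (hF : ∀ w ∈ F.support, rey H (monomial w 1) ∈ polarized hnd H) :
    rey H F ∈ polarized hnd H := by
  have : rey H F = ∑ w ∈ F.support, C (coeff w F) * rey H (monomial w 1) := by
    conv_lhs => rw [F.as_sum]
    rw [rey_sum]
    exact Finset.sum_congr rfl fun w _ => by
      rw [← rey_C_mul, C_mul_monomial, mul_one]
  rw [this]
  refine Subalgebra.sum_mem _ fun w hw => ?_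
  refine mul_mem ?_ (hF w hw)
  rw [← algebraMap_eq]
  exact Subalgebra.algebraMap_mem _ _

theorem td_list_X_prod (L : List (Fin n × Fin d)) :
    ((L.map fun v => (X v : MvPolynomial (Fin n × Fin d) k)).prod).totalDegree ≤ L.length := by
  induction L with
  | nil => simp
  | cons v L ih =>
    rw [List.map_cons, List.prod_cons, List.length_cons]
    refine (totalDegree_mul _ _).trans ?_
    rw [totalDegree_X]
    omega

end Key

section KeyMain

variable {p : ℕ} [CharP k p] [Infinite k]

theorem rey_monomial_mem (hnd : n ≤ d) (hp : p.Prime)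
    (H : Subgroup (GL (Fin n) k)) [Fintype ↥H] (hcard : Nat.card ↥H < p) :
    ∀ r : ℕ, ∀ ν : (Fin n × Fin d) →₀ ℕ, (ν.sum fun _ e => e) ≤ r →
      rey H (monomial ν 1) ∈ polarized hnd H := by
  classical
  set N := Nat.card ↥H with hNdef
  have hNcard : Fintype.card ↥H = N := (Nat.card_eq_fintype_card (α := ↥H)).symm
  have hN0 : (N : k) ≠ 0 :=
    cast_ne_zero_of_lt Nat.card_pos hcard
  have hNfact : ((N.factorial : ℕ) : k) ≠ 0 := cast_factorial_ne_zero hp hcard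
  intro r
  induction r using Nat.strong_induction_on with
  | _ r ih =>
  intro ν hν
  rcases lt_or_eq_of_le hν with hlt | hr
  · exact ih _ hlt ν le_rfl
  · by_cases hsmall : (ν.sum fun _ e => e) ≤ N
    · exact rey_monomial_mem_small hnd hp H hcard ν hsmall
    · have hNr : N < r := by omega
      obtain ⟨L, hL1, hL2⟩ := exists_list_of_monomial (k := k) ν
      set L₁ := L.take N with hL₁def
      set L₂ := L.drop N with hL₂def
      have hlen : L.length = r := by rw [hL1, hr]
      have hlen₁ : L₁.length = N := by rw [hL₁def, List.length_take]; omega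
      have hlen₂ : L₂.length = r - N := by rw [hL₂def, List.length_drop]; omega
      set m₂ := (L₂.map fun v => (X v : MvPolynomial (Fin n × Fin d) k)).prod with hm₂
      set f : Fin N → MvPolynomial (Fin n × Fin d) k :=
        fun j => X (L₁.get (Fin.cast hlen₁.symm j)) with hfdef
      have hm₁ : (∏ j, f j)
          = (L₁.map fun v => (X v : MvPolynomial (Fin n × Fin d) k)).prod := by
        rw [← List.ofFn_getElem_eq_map L₁ (fun v => (X v : MvPolynomial (Fin n × Fin d) k)),
          List.prod_ofFn]
        exact Fintype.prod_equiv (finCongr hlen₁.symm) _ _ fun x => rfl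
      have hsplit : monomial ν 1 = (∏ j, f j) * m₂ := by
        rw [hm₁, hm₂, ← List.prod_append, ← List.map_append, List.take_append_drop, hL2]
      have hpol := polarization (A := MvPolynomial (Fin n × Fin d) k) N f
      have hfact : ((N.factorial : ℕ) : MvPolynomial (Fin n × Fin d) k)
          = C ((N.factorial : ℕ) : k) := by rw [map_natCast]
      have hm₁' : (∏ j, f j) = ((N.factorial : ℕ) : k)⁻¹ •
          ∑ S : Finset (Fin N),
            (-1 : MvPolynomial (Fin n × Fin d) k) ^ (N - S.card) * (∑ j ∈ S, f j) ^ N := by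
        rw [hpol, hfact, ← smul_eq_C_mul, smul_smul, inv_mul_cancel₀ hNfact, one_smul]
      rw [hsplit, hm₁', smul_mul_assoc, rey_smul, Finset.sum_mul, rey_sum]
      refine Subalgebra.smul_mem _ (Subalgebra.sum_mem _ fun S _ => ?_) _
      set ℓ := ∑ j ∈ S, f j with hℓ
      have hℓdeg : ℓ.totalDegree ≤ 1 := by
        refine (totalDegree_finset_sum _ _).trans ?_
        refine Finset.sup_le fun j _ => ?_
        rw [hfdef]
        exact le_of_eq (totalDegree_X _)
      obtain ⟨eS, heinv, hedeg, heq⟩ := pow_card_eq_neg_sum (H := H) ℓ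
      rw [hNcard] at heq hedeg
      have hterm : ((-1 : MvPolynomial (Fin n × Fin d) k) ^ (N - S.card) * ℓ ^ N) * m₂
          = C ((-1 : k) ^ (N - S.card)) * (- ∑ j ∈ Finset.range N, eS j * (ℓ ^ j * m₂)) := by
        rw [heq]
        have hneg : ((-1 : MvPolynomial (Fin n × Fin d) k) ^ (N - S.card))
            = C ((-1 : k) ^ (N - S.card)) := by
          rw [map_pow, map_neg, map_one]
        have hs : (∑ j ∈ Finset.range N, eS j * ℓ ^ j) * m₂
            = ∑ j ∈ Finset.range N, eS j * (ℓ ^ j * m₂) := by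
          rw [Finset.sum_mul]
          exact Finset.sum_congr rfl fun j _ => mul_assoc _ _ _
        rw [hneg, mul_assoc, neg_mul, hs, mul_neg]
      rw [hterm, rey_C_mul, rey_neg]
      refine mul_mem (by rw [← algebraMap_eq]; exact Subalgebra.algebraMap_mem _ _) (neg_mem ?_)
      rw [rey_sum]
      refine Subalgebra.sum_mem _ fun j hj => ?_
      rw [rey_invariant_mul (fun h hh => heinv j h hh)]
      refine mul_mem ?_ ?_
      · rw [← rey_of_invariant hN0 (heinv j)]
        refine rey_poly_mem hnd fun w hw => ?_
        refine ih N hNr w ?_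
        calc (w.sum fun _ e => e) ≤ (eS j).totalDegree := le_totalDegree hw
          _ ≤ N := hedeg hℓdeg j
      · refine rey_poly_mem hnd fun w hw => ?_
        refine ih (r - 1) (by omega) w ?_
        have hdegw : (w.sum fun _ e => e) ≤ (ℓ ^ j * m₂).totalDegree := le_totalDegree hw
        have hbound : (ℓ ^ j * m₂).totalDegree ≤ j + (r - N) := by
          refine (totalDegree_mul _ _).trans ?_
          have h1 : (ℓ ^ j).totalDegree ≤ j := by
            refine (totalDegree_pow _ _).trans ?_
            calc j * ℓ.totalDegree ≤ j * 1 := Nat.mul_le_mul_left _ hℓdeg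
              _ = j := mul_one j
          have h2 : m₂.totalDegree ≤ r - N := by
            rw [hm₂, ← hlen₂]
            exact td_list_X_prod L₂
          omega
        have hjN : j < N := Finset.mem_range.1 hj
        omega

end KeyMain
end Stmt11

/-- Theorem 23(a): if `H ≤ GL_n` is finite and `char k = p > |H|`, then
`GL_d * j(^H k[M_{n,n}]) = ^H k[M_{n,d}]`. -/
theorem stmt11 {k : Type*} [Field k] [IsAlgClosed k] {n d p : ℕ} (hn : 0 < n) (hnd : n ≤ d)
    [CharP k p] (hp : p.Prime) (H : Subgroup (GL (Fin n) k)) [Finite H]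
    (hcard : Nat.card H < p) :
    polarized hnd H = HinvAlg H := by
  classical
  letI : Fintype ↥H := Fintype.ofFinite ↥H
  open Stmt11 in
  apply le_antisymm
  · refine Algebra.adjoin_le ?_
    rintro F ⟨g, f, hf, rfl⟩
    show ∀ h ∈ H, rowAct h (colAct g (jmap hnd f)) = colAct g (jmap hnd f)
    intro h hh
    rw [rowAct_eq_hact, colAct_eq_csub, jmap_eq_csub, csub_csub, hact_csub,
      show (hact (c := Fin n) h) f = f from hf h hh]
  · intro F hF
    have hN0 : ((Nat.card ↥H : ℕ) : k) ≠ 0 := cast_ne_zero_of_lt Nat.card_pos hcard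
    have hfix : rey H F = F := rey_of_invariant hN0 fun h hh => hF h hh
    rw [← hfix]
    refine rey_poly_mem hnd fun w hw => ?_
    exact rey_monomial_mem hnd hp H hcard (w.sum fun _ e => e) w le_rfl
end

section
/- Suppose char k = 2 and let a ∈ k be a primitive cube root of unity. Let H be the subgroup of GL_2(k) generated by the scalar matrix a·I₂ (a cyclic group of order 3), and let d ≥ 3. Then the monomial x₁x₂x₃ = X(0,0)·X(0,1)·X(0,2) ∈ k[M_{2,d}] is H-invariant but does not belong to GL_d * j(^H k[M_{2,2}]); in particular GL_d * j(^H k[M_{2,2}]) ≠ ^H k[M_{2,d}]. (Example in Theorem 23(c).) -/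
open MvPolynomial

section DegAux

lemma degFin {σ : Type*} [Fintype σ] (m : σ →₀ ℕ) : m.degree = ∑ i, m i :=
  Finset.sum_subset (Finset.subset_univ _) fun i _ hi => Finsupp.notMem_support_iff.mp hi

lemma degAdd {σ : Type*} [Fintype σ] (u v : σ →₀ ℕ) :
    (u + v).degree = u.degree + v.degree := by
  simp [degFin, Finsupp.add_apply, Finset.sum_add_distrib]

lemma degSingle {σ : Type*} [Fintype σ] [DecidableEq σ] (i : σ) (n : ℕ) :
    (Finsupp.single i n).degree = n := by
  simp [degFin, Finsupp.single_apply]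

end DegAux

section ScaleAux

variable {k : Type*} [Field k]

lemma aeval_scale_monomial {σ : Type*} (c : k) (v : σ →₀ ℕ) (r : k) :
    aeval (fun i => C c * X i) (monomial v r) = C (c ^ v.degree) * monomial v r := by
  classical
  rw [aeval_monomial, monomial_eq, MvPolynomial.algebraMap_eq]
  have h1 : (v.prod fun i e => ((C c * X i : MvPolynomial σ k)) ^ e)
      = (∏ i ∈ v.support, (C (c ^ v i) : MvPolynomial σ k)) *
        v.prod fun i e => (X i : MvPolynomial σ k) ^ e := by
    rw [Finsupp.prod, Finsupp.prod, ← Finset.prod_mul_distrib]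
    refine Finset.prod_congr rfl fun i _ => ?_
    rw [mul_pow, C_pow]
  rw [h1, ← map_prod (C : k →+* MvPolynomial σ k), Finset.prod_pow_eq_pow_sum]
  show C r * (C (c ^ v.degree) * _) = _
  ring
end ScaleAux

section ScaleAux2
variable {k : Type*} [Field k]

lemma coeff_scale {σ : Type*} (c : k) (F : MvPolynomial σ k) (m : σ →₀ ℕ) :
    coeff m (aeval (fun i => C c * X i) F) = c ^ m.degree * coeff m F := by
  classical
  conv_lhs => rw [F.as_sum, map_sum]
  rw [coeff_sum]
  simp_rw [aeval_scale_monomial, coeff_C_mul, coeff_monomial, mul_ite, mul_zero]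
  rw [Finset.sum_ite_eq' F.support m (fun v => c ^ v.degree * coeff v F)]
  split_ifs with h
  · rfl
  · rw [MvPolynomial.notMem_support_iff.mp h, mul_zero]

lemma rowAct_scalar {n d : ℕ} (h : GL (Fin n) k) (b : k)
    (hmat : ((h⁻¹ : GL (Fin n) k) : Matrix (Fin n) (Fin n) k)
      = algebraMap k (Matrix (Fin n) (Fin n) k) b) :
    (rowAct h : MvPolynomial (Fin n × Fin d) k →ₐ[k] MvPolynomial (Fin n × Fin d) k)
      = aeval (fun p => C b * X p) := by
  unfold rowAct
  congr 1
  funext p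
  rw [hmat, Finset.sum_eq_single p.1]
  · simp [Matrix.algebraMap_matrix_apply]
  · intro s _ hs
    simp [Matrix.algebraMap_matrix_apply, (Ne.symm hs : ¬ p.1 = s)]
  · simp

lemma mem_zpowers_scalar {n : ℕ} (u' : kˣ) (hu3 : u' ^ 3 = 1)
    (h : GL (Fin n) k)
    (hh : h ∈ Subgroup.zpowers
      (Units.map (algebraMap k (Matrix (Fin n) (Fin n) k)).toMonoidHom u')) :
    ∃ b : k, b ^ 3 = 1 ∧
      ((h⁻¹ : GL (Fin n) k) : Matrix (Fin n) (Fin n) k)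
        = algebraMap k (Matrix (Fin n) (Fin n) k) b := by
  rw [Subgroup.mem_zpowers_iff] at hh
  obtain ⟨z, rfl⟩ := hh
  refine ⟨((u' ^ (-z) : kˣ) : k), ?_, ?_⟩
  · have h1 : (u' ^ (-z)) ^ (3 : ℕ) = 1 := by
      rw [← zpow_natCast (u' ^ (-z)) 3, ← zpow_mul, mul_comm, zpow_mul, zpow_natCast, hu3,
        one_zpow]
    calc ((u' ^ (-z) : kˣ) : k) ^ 3 = (((u' ^ (-z)) ^ (3 : ℕ) : kˣ) : k) := by
          rw [Units.val_pow_eq_pow_val]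
      _ = 1 := by rw [h1, Units.val_one]
  · rw [← map_zpow, ← map_inv, ← zpow_neg, Units.coe_map]
    rfl

end ScaleAux2

section MMAux

lemma mmLt0 (d : ℕ) (hd : 3 ≤ d) : 0 < d := by omega
lemma mmLt1 (d : ℕ) (hd : 3 ≤ d) : 1 < d := by omega
lemma mmLt2 (d : ℕ) (hd : 3 ≤ d) : 2 < d := by omega

noncomputable def mm (d : ℕ) (hd : 3 ≤ d) : (Fin 2 × Fin d) →₀ ℕ :=
  Finsupp.single ((0 : Fin 2), (⟨0, mmLt0 d hd⟩ : Fin d)) 1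
    + Finsupp.single ((0 : Fin 2), (⟨1, mmLt1 d hd⟩ : Fin d)) 1
    + Finsupp.single ((0 : Fin 2), (⟨2, mmLt2 d hd⟩ : Fin d)) 1

lemma mm_apply_le_one {d : ℕ} (hd : 3 ≤ d) (q : Fin 2 × Fin d) : mm d hd q ≤ 1 := by
  unfold mm
  simp only [Finsupp.add_apply, Finsupp.single_apply]
  split_ifs <;> simp_all [Prod.ext_iff, Fin.ext_iff] <;> omega

lemma mm_row1 {d : ℕ} (hd : 3 ≤ d) (q : Fin 2 × Fin d) (hq : q.1 ≠ 0) : mm d hd q = 0 := by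
  unfold mm
  simp only [Finsupp.add_apply, Finsupp.single_apply]
  split_ifs <;> simp_all [Prod.ext_iff]

lemma mm_degree {d : ℕ} (hd : 3 ≤ d) : (mm d hd).degree = 3 := by
  unfold mm
  rw [degAdd, degAdd, degSingle, degSingle, degSingle]

lemma mm_ne_zero {d : ℕ} (hd : 3 ≤ d) : mm d hd ≠ 0 := by
  intro h
  have := mm_degree hd
  rw [h, map_zero] at this
  omega

variable {k : Type*} [Field k]

lemma coeff_mm_mul_row1 {d : ℕ} (hd : 3 ≤ d) (M : MvPolynomial (Fin 2 × Fin d) k)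
    (i : Fin 2) (hi : i ≠ 0) (c : Fin d → k) :
    coeff (mm d hd) (M * ∑ s, X (i, s) * C (c s)) = 0 := by
  classical
  rw [Finset.mul_sum, coeff_sum]
  apply Finset.sum_eq_zero
  intro s _
  have hr : M * (X (i, s) * C (c s)) = (M * C (c s)) * X (i, s) := by ring
  have h0 : mm d hd (i, s) = 0 := mm_row1 hd (i, s) hi
  rw [hr, coeff_mul_X', if_neg (by simp [Finsupp.mem_support_iff, h0])]

lemma coeff_mm_mul_sq {d : ℕ} (hd : 3 ≤ d) [CharP k 2]
    (M : MvPolynomial (Fin 2 × Fin d) k) (i : Fin 2) (c : Fin d → k) :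
    coeff (mm d hd) (M * (∑ s, X (i, s) * C (c s)) ^ 2) = 0 := by
  classical
  rw [CharTwo.sum_sq]
  rw [Finset.mul_sum, coeff_sum]
  apply Finset.sum_eq_zero
  intro s _
  have hr : M * (X (i, s) * C (c s)) ^ 2 = ((M * C (c s) ^ 2) * X (i, s)) * X (i, s) := by
    ring
  rw [hr, coeff_mul_X']
  split_ifs with h
  · have h1 : (i, s) ∉ (mm d hd - Finsupp.single (i, s) 1).support := by
      rw [Finsupp.mem_support_iff, Finsupp.tsub_apply, Finsupp.single_eq_same]
      have := mm_apply_le_one hd (i, s)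
      omega
    rw [coeff_mul_X', if_neg h1]
  · rfl

end MMAux

section KeyAux
variable {k : Type*} [Field k]

lemma key {d : ℕ} (hd : 3 ≤ d) [CharP k 2] (c : Fin 2 × Fin 2 → Fin d → k)
    (f : MvPolynomial (Fin 2 × Fin 2) k)
    (hf : ∀ m : (Fin 2 × Fin 2) →₀ ℕ, ¬ (3 ∣ m.degree) → coeff m f = 0) :
    (∀ m' : (Fin 2 × Fin d) →₀ ℕ, ¬ (3 ∣ m'.degree) →
      coeff m' (aeval (fun p => ∑ s, X (p.1, s) * C (c p s)) f) = 0) ∧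
    coeff (mm d hd) (aeval (fun p => ∑ s, X (p.1, s) * C (c p s)) f) = 0 := by
  classical
  set Ψ : Fin 2 × Fin 2 → MvPolynomial (Fin 2 × Fin d) k :=
    fun p => ∑ s, X (p.1, s) * C (c p s) with hΨ
  have hΨhom : ∀ p, (Ψ p).IsHomogeneous 1 := by
    intro p
    rw [hΨ]
    exact MvPolynomial.IsHomogeneous.sum _ _ _ fun s _ =>
      (isHomogeneous_X _ _).mul (isHomogeneous_C _ _)
  have hP : ∀ m : (Fin 2 × Fin 2) →₀ ℕ, (∏ p, Ψ p ^ m p).IsHomogeneous m.degree := by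
    intro m
    rw [degFin m]
    exact MvPolynomial.IsHomogeneous.prod Finset.univ _ (fun p => m p)
      fun p _ => by simpa using (hΨhom p).pow (m p)
  have hP3 : ∀ m : (Fin 2 × Fin 2) →₀ ℕ, m.degree = 3 →
      coeff (mm d hd) (∏ p, Ψ p ^ m p) = 0 := by
    intro m hm3
    by_cases hrow : ∃ p, 0 < m p ∧ p.1 ≠ 0
    · obtain ⟨p₁, hp₁, hne⟩ := hrow
      have hsplit : (∏ p, Ψ p ^ m p)
          = (Ψ p₁ ^ (m p₁ - 1) * ∏ p ∈ Finset.univ.erase p₁, Ψ p ^ m p) * Ψ p₁ := by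
        conv_lhs => rw [← Finset.mul_prod_erase Finset.univ _ (Finset.mem_univ p₁),
          show m p₁ = (m p₁ - 1) + 1 from by omega]
        ring
      rw [hsplit, hΨ]
      exact coeff_mm_mul_row1 hd _ p₁.1 hne _
    · push_neg at hrow
      have h10 : m (1, 0) = 0 := by
        by_contra hc
        exact absurd (hrow (1, 0) (Nat.pos_of_ne_zero hc)) (by decide)
      have h11 : m (1, 1) = 0 := by
        by_contra hc
        exact absurd (hrow (1, 1) (Nat.pos_of_ne_zero hc)) (by decide)
      have hsum : m (0, 0) + m (0, 1) = 3 := by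
        have hdf := degFin m
        rw [Fintype.sum_prod_type, Fin.sum_univ_two] at hdf
        simp only [Fin.sum_univ_two] at hdf
        omega
      have gen : ∀ p₁ : Fin 2 × Fin 2, 2 ≤ m p₁ →
          coeff (mm d hd) (∏ p, Ψ p ^ m p) = 0 := by
        intro p₁ hp₁
        have hsplit : (∏ p, Ψ p ^ m p)
            = (Ψ p₁ ^ (m p₁ - 2) * ∏ p ∈ Finset.univ.erase p₁, Ψ p ^ m p) * Ψ p₁ ^ 2 := by
          conv_lhs => rw [← Finset.mul_prod_erase Finset.univ _ (Finset.mem_univ p₁),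
            show m p₁ = (m p₁ - 2) + 2 from by omega]
          ring
        rw [hsplit, hΨ]
        exact coeff_mm_mul_sq hd _ p₁.1 _
      rcases (by omega : 2 ≤ m (0, 0) ∨ 2 ≤ m (0, 1)) with hx | hx
      · exact gen (0, 0) hx
      · exact gen (0, 1) hx
  have expand : aeval Ψ f = ∑ v ∈ f.support, C (coeff v f) * ∏ p, Ψ p ^ v p := by
    conv_lhs => rw [f.as_sum, map_sum]
    refine Finset.sum_congr rfl fun v _ => ?_
    rw [aeval_monomial, MvPolynomial.algebraMap_eq]
    congr 1
    rw [Finsupp.prod_fintype]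
    intro p
    exact pow_zero _
  constructor
  · intro m' hm'
    rw [expand, coeff_sum]
    apply Finset.sum_eq_zero
    intro v hv
    rw [coeff_C_mul]
    have h3 : 3 ∣ v.degree := by
      by_contra hc
      exact (MvPolynomial.mem_support_iff.mp hv) (hf v hc)
    rw [(hP v).coeff_eq_zero fun hdeg => hm' (hdeg ▸ h3), mul_zero]
  · rw [expand, coeff_sum]
    apply Finset.sum_eq_zero
    intro v hv
    rw [coeff_C_mul]
    by_cases hv3 : v.degree = 3
    · rw [hP3 v hv3, mul_zero]
    · rw [(hP v).coeff_eq_zero (by rw [mm_degree hd]; exact fun h => hv3 h.symm), mul_zero]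

end KeyAux

def SAlg (k : Type*) [Field k] (d : ℕ) (hd : 3 ≤ d) :
    Subalgebra k (MvPolynomial (Fin 2 × Fin d) k) where
  carrier := {F | (∀ m : (Fin 2 × Fin d) →₀ ℕ, ¬ (3 ∣ m.degree) → coeff m F = 0)
    ∧ coeff (mm d hd) F = 0}
  add_mem' := fun {F G} hF hG =>
    ⟨fun m hm => by rw [coeff_add, hF.1 m hm, hG.1 m hm, add_zero],
      by rw [coeff_add, hF.2, hG.2, add_zero]⟩
  mul_mem' := fun {F G} hF hG => by
    constructor
    · intro m hm
      rw [coeff_mul]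
      apply Finset.sum_eq_zero
      rintro ⟨u, v⟩ huv
      rw [Finset.HasAntidiagonal.mem_antidiagonal] at huv
      by_cases h3u : 3 ∣ u.degree
      · by_cases h3v : 3 ∣ v.degree
        · exact absurd (by rw [← huv, degAdd]; exact Nat.dvd_add h3u h3v) hm
        · rw [hG.1 v h3v, mul_zero]
      · rw [hF.1 u h3u, zero_mul]
    · rw [coeff_mul]
      apply Finset.sum_eq_zero
      rintro ⟨u, v⟩ huv
      rw [Finset.HasAntidiagonal.mem_antidiagonal] at huv
      by_cases h3u : 3 ∣ u.degree
      · by_cases h3v : 3 ∣ v.degree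
        · have hsum : u.degree + v.degree = 3 := by rw [← degAdd, huv, mm_degree hd]
          obtain ⟨t, ht⟩ := h3u
          rcases (by omega : u.degree = 0 ∨ u.degree = 3) with h0 | h0
          · have hu0 : u = 0 := (Finsupp.degree_eq_zero_iff u).mp h0
            have hv : v = mm d hd := by rw [hu0, zero_add] at huv; exact huv
            rw [hv, hG.2, mul_zero]
          · have hv0 : v = 0 := (Finsupp.degree_eq_zero_iff v).mp (by omega)
            have hu : u = mm d hd := by rw [hv0, add_zero] at huv; exact huv
            rw [hu, hF.2, zero_mul]
        · rw [hG.1 v h3v, mul_zero]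
      · rw [hF.1 u h3u, zero_mul]
  algebraMap_mem' := fun r => by
    constructor
    · intro m hm
      rw [MvPolynomial.algebraMap_eq, coeff_C]
      split_ifs with h0
      · exact absurd (by rw [← h0]; simp) hm
      · rfl
    · rw [MvPolynomial.algebraMap_eq, coeff_C]
      split_ifs with h0
      · exact absurd h0.symm (mm_ne_zero hd)
      · rfl

/-- Theorem 23(c), first example: `char k = 2`, `H = ⟨a·I₂⟩` with `a` a primitive cube root
of unity. Then `x₁x₂x₃` is `H`-invariant but not polarized, so
`GL_d * j(^H k[M_{2,2}]) ≠ ^H k[M_{2,d}]`. -/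
theorem stmt13 {k : Type*} [Field k] [IsAlgClosed k] [CharP k 2] {d : ℕ} (hd : 3 ≤ d)
    (a : k) (ha : IsPrimitiveRoot a 3)
    (H : Subgroup (GL (Fin 2) k))
    (hH : H = Subgroup.zpowers
      ((Units.map (algebraMap k (Matrix (Fin 2) (Fin 2) k)).toMonoidHom)
        (ha.isUnit (by norm_num)).unit : GL (Fin 2) k)) :
    (X ((0 : Fin 2), (⟨0, by omega⟩ : Fin d)) * X ((0 : Fin 2), (⟨1, by omega⟩ : Fin d)) *
        X ((0 : Fin 2), (⟨2, by omega⟩ : Fin d)) ∈ HinvAlg H) ∧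
    (X ((0 : Fin 2), (⟨0, by omega⟩ : Fin d)) * X ((0 : Fin 2), (⟨1, by omega⟩ : Fin d)) *
        X ((0 : Fin 2), (⟨2, by omega⟩ : Fin d)) ∉ polarized (by omega) H) ∧
    polarized (show 2 ≤ d by omega) H ≠ HinvAlg H := by
  have h2d : (2 : ℕ) ≤ d := by omega
  -- the cubic monomial
  have hFmon : (X ((0 : Fin 2), (⟨0, by omega⟩ : Fin d)) * X ((0 : Fin 2), (⟨1, by omega⟩ : Fin d))
      * X ((0 : Fin 2), (⟨2, by omega⟩ : Fin d)) : MvPolynomial (Fin 2 × Fin d) k)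
      = monomial (mm d hd) 1 := by
    show monomial _ (1 : k) * monomial _ 1 * monomial _ 1 = _
    rw [monomial_mul, monomial_mul, one_mul, one_mul]
    rfl
  -- the scalar unit
  have hu'v : (((ha.isUnit (by norm_num)).unit : kˣ) : k) = a := IsUnit.unit_spec _
  have hu'3 : ((ha.isUnit (by norm_num)).unit : kˣ) ^ 3 = 1 := by
    ext
    rw [Units.val_pow_eq_pow_val, hu'v, ha.pow_eq_one, Units.val_one]
  -- first conjunct
  have h1 : (X ((0 : Fin 2), (⟨0, by omega⟩ : Fin d)) * X ((0 : Fin 2), (⟨1, by omega⟩ : Fin d))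
      * X ((0 : Fin 2), (⟨2, by omega⟩ : Fin d)) : MvPolynomial (Fin 2 × Fin d) k)
      ∈ HinvAlg H := by
    show ∀ h ∈ H, rowAct h _ = _
    intro h hh
    obtain ⟨b, hb3, hbmat⟩ := mem_zpowers_scalar _ hu'3 h (hH ▸ hh)
    rw [rowAct_scalar h b hbmat]
    apply MvPolynomial.ext
    intro m
    rw [coeff_scale, hFmon, coeff_monomial]
    split_ifs with hm
    · rw [← hm, mm_degree hd, hb3, one_mul]
    · rw [mul_zero]
  -- invariant polynomials of two vectors live in degrees divisible by 3
  have hinvdeg : ∀ f : MvPolynomial (Fin 2 × Fin 2) k, f ∈ HinvAlg (d := 2) H →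
      ∀ m : (Fin 2 × Fin 2) →₀ ℕ, ¬ (3 ∣ m.degree) → coeff m f = 0 := by
    intro f hfH m hm
    have hUH : ((Units.map (algebraMap k (Matrix (Fin 2) (Fin 2) k)).toMonoidHom)
        (ha.isUnit (by norm_num)).unit : GL (Fin 2) k) ∈ H := by
      rw [hH]; exact Subgroup.mem_zpowers _
    have hinv : rowAct ((Units.map (algebraMap k (Matrix (Fin 2) (Fin 2) k)).toMonoidHom)
        (ha.isUnit (by norm_num)).unit : GL (Fin 2) k) f = f := hfH _ hUH
    have hbmat : ((((Units.map (algebraMap k (Matrix (Fin 2) (Fin 2) k)).toMonoidHom)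
          (ha.isUnit (by norm_num)).unit : GL (Fin 2) k)⁻¹ : GL (Fin 2) k)
          : Matrix (Fin 2) (Fin 2) k) = algebraMap k (Matrix (Fin 2) (Fin 2) k) a⁻¹ := by
      rw [← map_inv, Units.coe_map]
      show algebraMap k (Matrix (Fin 2) (Fin 2) k) _ = _
      rw [Units.val_inv_eq_inv_val, hu'v]
    rw [rowAct_scalar _ _ hbmat] at hinv
    have hco := congrArg (coeff m) hinv
    rw [coeff_scale] at hco
    by_contra hc
    have h1' : (a⁻¹ : k) ^ m.degree = 1 := mul_right_cancel₀ hc (hco.trans (one_mul _).symm)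
    rw [inv_pow, inv_eq_one] at h1'
    exact hm ((ha.pow_eq_one_iff_dvd _).mp h1')
  -- polarized algebra is contained in SAlg
  have hpol : polarized h2d H ≤ SAlg k d hd := by
    apply Algebra.adjoin_le
    rintro F' ⟨g, f, hfH, rfl⟩
    have hcomp : colAct g (jmap h2d f)
        = aeval (fun p : Fin 2 × Fin 2 => ∑ s, X (p.1, s) *
            C ((g : Matrix (Fin d) (Fin d) k) s (Fin.castLE h2d p.2))) f := by
      have hfun : (fun i : Fin 2 × Fin 2 => colAct g (X (i.1, Fin.castLE h2d i.2)))
          = fun p : Fin 2 × Fin 2 => ∑ s, X (p.1, s) *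
              C ((g : Matrix (Fin d) (Fin d) k) s (Fin.castLE h2d p.2)) := by
        funext p
        show colAct g (X (p.1, Fin.castLE h2d p.2)) = _
        unfold colAct
        rw [aeval_X]
      rw [show colAct g (jmap h2d f) = ((colAct g).comp (jmap h2d)) f from rfl]
      unfold jmap
      rw [comp_aeval, hfun]
    have hk := key hd (fun p s => (g : Matrix (Fin d) (Fin d) k) s (Fin.castLE h2d p.2)) f
      (hinvdeg f hfH)
    show _ ∧ _
    rw [hcomp]
    exact ⟨hk.1, hk.2⟩
  have h2 : (X ((0 : Fin 2), (⟨0, by omega⟩ : Fin d)) * X ((0 : Fin 2), (⟨1, by omega⟩ : Fin d))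
      * X ((0 : Fin 2), (⟨2, by omega⟩ : Fin d)) : MvPolynomial (Fin 2 × Fin d) k)
      ∉ polarized h2d H := by
    intro hmem
    have hS : (∀ m : (Fin 2 × Fin d) →₀ ℕ, ¬ (3 ∣ m.degree) →
          coeff m (X ((0 : Fin 2), (⟨0, by omega⟩ : Fin d))
            * X ((0 : Fin 2), (⟨1, by omega⟩ : Fin d))
            * X ((0 : Fin 2), (⟨2, by omega⟩ : Fin d)) : MvPolynomial (Fin 2 × Fin d) k) = 0)
        ∧ coeff (mm d hd) (X ((0 : Fin 2), (⟨0, by omega⟩ : Fin d))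
          * X ((0 : Fin 2), (⟨1, by omega⟩ : Fin d))
          * X ((0 : Fin 2), (⟨2, by omega⟩ : Fin d)) : MvPolynomial (Fin 2 × Fin d) k) = 0 :=
      hpol hmem
    have := hS.2
    rw [hFmon, coeff_monomial, if_pos rfl] at this
    exact one_ne_zero this
  refine ⟨h1, h2, ?_⟩
  intro heq
  apply h2
  have h1' := h1
  rw [← heq] at h1'
  exact h1'
end

section
/- Suppose char k = 2 and let a ∈ k be a primitive cube root of unity. Let H be the subgroup of GL_3(k) generated by the scalar matrix a·I₃ (a cyclic group of order 3), and let d ≥ 3. Then ^H k[M_{3,d}] is generated as a k-algebra by the monomials of total degree 3 in the variables X(i,q), and GL_d * j(^H k[M_{3,3}]) = ^H k[M_{3,d}]. (Example in Theorem 23(c).) -/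
open MvPolynomial

/-! ### Auxiliary: the scaling substitution `X p ↦ c • X p` -/

noncomputable def scaleHom {k : Type*} [CommSemiring k] {σ : Type*} (c : k) :
    MvPolynomial σ k →ₐ[k] MvPolynomial σ k :=
  aeval fun p => C c * X p

theorem scaleHom_monomial {k : Type*} [CommSemiring k] {σ : Type*} (c : k)
    (m : σ →₀ ℕ) (r : k) :
    scaleHom c (monomial m r) = monomial m (c ^ (m.sum fun _ e => e) * r) := by
  rw [scaleHom, aeval_monomial, ← C_mul_monomial, monomial_eq]
  simp only [mul_pow, ← C_pow]
  rw [Finsupp.prod_mul, Finsupp.prod, ← map_prod, Finset.prod_pow_eq_pow_sum,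
    algebraMap_eq, Finsupp.sum]
  ring

theorem coeff_scaleHom {k : Type*} [CommSemiring k] {σ : Type*} (c : k)
    (F : MvPolynomial σ k) (m : σ →₀ ℕ) :
    coeff m (scaleHom c F) = c ^ (m.sum fun _ e => e) * coeff m F := by
  classical
  conv_lhs => rw [F.as_sum, map_sum]
  simp_rw [scaleHom_monomial]
  rw [coeff_sum]
  simp_rw [coeff_monomial]
  rw [Finset.sum_ite_eq' F.support m fun v => (c ^ v.sum fun _ e => e) * coeff v F]
  by_cases h : m ∈ F.support
  · simp [h]
  · simp [h, notMem_support_iff.mp h]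

theorem scaleHom_fixed {k : Type*} [CommSemiring k] {σ : Type*} {c : k}
    (hc : c ^ 3 = 1) {F : MvPolynomial σ k}
    (hF : ∀ m ∈ F.support, 3 ∣ (m.sum fun _ e => e)) : scaleHom c F = F := by
  conv_lhs => rw [F.as_sum, map_sum]
  conv_rhs => rw [F.as_sum]
  refine Finset.sum_congr rfl fun m hm => ?_
  obtain ⟨t, ht⟩ := hF m hm
  rw [scaleHom_monomial, ht, pow_mul, hc, one_pow, one_mul]

/-- `rowAct` of a scalar matrix is a scaling substitution. -/
theorem rowAct_units_map {k : Type*} [Field k] {d : ℕ} (v : kˣ) :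
    rowAct (k := k) (n := 3) (d := d)
      ((Units.map (algebraMap k (Matrix (Fin 3) (Fin 3) k)).toMonoidHom) v)
      = scaleHom ((v⁻¹ : kˣ) : k) := by
  apply MvPolynomial.algHom_ext
  intro p
  rw [rowAct, scaleHom, aeval_X, aeval_X, ← map_inv]
  simp [Units.coe_map, Matrix.algebraMap_matrix_apply, apply_ite C, ite_mul, zero_mul,
    Finset.sum_ite_eq]
section Char
variable {k : Type*} [Field k] (a : k) (ha : IsPrimitiveRoot a 3)
  (H : Subgroup (GL (Fin 3) k))
  (hH : H = Subgroup.zpowers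
      ((Units.map (algebraMap k (Matrix (Fin 3) (Fin 3) k)).toMonoidHom)
        (ha.isUnit (by norm_num)).unit : GL (Fin 3) k))

include hH

theorem mem_Hinv_iff {d : ℕ} (F : MvPolynomial (Fin 3 × Fin d) k) :
    F ∈ HinvAlg (d := d) H ↔ ∀ m ∈ F.support, 3 ∣ (m.sum fun _ e => e) := by
  set u := (ha.isUnit (by norm_num)).unit with hu
  have hu3 : u ^ (3 : ℕ) = 1 := Units.ext (by
    rw [Units.val_pow_eq_pow_val, hu, IsUnit.unit_spec, ha.pow_eq_one, Units.val_one])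
  constructor
  · intro hF m hm
    have h0 : (Units.map (algebraMap k (Matrix (Fin 3) (Fin 3) k)).toMonoidHom) u ∈ H := by
      rw [hH]; exact Subgroup.mem_zpowers _
    have hfix := hF _ h0
    rw [rowAct_units_map] at hfix
    have hc := congrArg (coeff m) hfix
    rw [coeff_scaleHom] at hc
    have hne : coeff m F ≠ 0 := mem_support_iff.mp hm
    have h1 : ((u⁻¹ : kˣ) : k) ^ (m.sum fun _ e => e) = 1 :=
      mul_right_cancel₀ hne (by rw [hc, one_mul])
    have hainv : IsPrimitiveRoot a⁻¹ 3 := ha.inv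
    rw [Units.val_inv_eq_inv_val, IsUnit.unit_spec] at h1
    exact (hainv.pow_eq_one_iff_dvd _).mp h1
  · intro hF h hh
    rw [hH, Subgroup.mem_zpowers_iff] at hh
    obtain ⟨n, rfl⟩ := hh
    rw [← map_zpow, rowAct_units_map]
    refine scaleHom_fixed ?_ hF
    have : ((u ^ n)⁻¹) ^ (3 : ℕ) = (1 : kˣ) := by
      rw [inv_pow, ← zpow_natCast, ← zpow_mul, mul_comm, zpow_mul, zpow_natCast, hu3,
        one_zpow, inv_one]
    rw [← Units.val_pow_eq_pow_val, this, Units.val_one]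

end Char
theorem XXX_eq_monomial {k : Type*} [CommSemiring k] {σ : Type*} (i j l : σ) :
    (X i * X j * X l : MvPolynomial σ k)
      = monomial (Finsupp.single i 1 + Finsupp.single j 1 + Finsupp.single l 1) 1 := by
  rw [X, X, X, monomial_mul, monomial_mul, mul_one, mul_one]

theorem XXX_support {k : Type*} [CommSemiring k] [Nontrivial k] {σ : Type*} (i j l : σ) :
    ∀ m ∈ (X i * X j * X l : MvPolynomial σ k).support, 3 ∣ (m.sum fun _ e => e) := by
  classical
  intro m hm
  rw [XXX_eq_monomial, support_monomial, if_neg one_ne_zero, Finset.mem_singleton] at hm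
  subst hm
  refine ⟨1, ?_⟩
  rw [Finsupp.sum_add_index' (fun _ => rfl) (fun _ _ _ => rfl),
    Finsupp.sum_add_index' (fun _ => rfl) (fun _ _ _ => rfl),
    Finsupp.sum_single_index rfl, Finsupp.sum_single_index rfl, Finsupp.sum_single_index rfl]

theorem exists_extract {σ : Type*} (m : σ →₀ ℕ) (h : (m.sum fun _ e => e) ≠ 0) :
    ∃ i m', m = m' + Finsupp.single i 1 ∧ (m'.sum fun _ e => e) + 1 = (m.sum fun _ e => e) := by
  classical
  have hm : m ≠ 0 := by rintro rfl; simp at h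
  obtain ⟨i, hi⟩ : ∃ i, m i ≠ 0 := by
    by_contra hc; push_neg at hc
    exact hm (Finsupp.ext fun a => hc a)
  have heq : m = (m - Finsupp.single i 1) + Finsupp.single i 1 := by
    ext b
    rw [Finsupp.add_apply, Finsupp.tsub_apply, Finsupp.single_apply]
    by_cases hbi : i = b
    · subst hbi; simp; omega
    · simp [hbi]
  refine ⟨i, m - Finsupp.single i 1, heq, ?_⟩
  conv_rhs => rw [heq]
  rw [Finsupp.sum_add_index' (fun _ => rfl) (fun _ _ _ => rfl),
    Finsupp.sum_single_index rfl]

theorem monomial_mem_adjoin {k : Type*} [CommSemiring k] {σ : Type*} (t : ℕ) :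
    ∀ (m : σ →₀ ℕ) (r : k), (m.sum fun _ e => e) = 3 * t →
      monomial m r ∈ Algebra.adjoin k {F : MvPolynomial σ k | ∃ i j l, F = X i * X j * X l} := by
  induction t with
  | zero =>
    intro m r h
    have hm : m = 0 := by
      rw [Nat.mul_zero, Finsupp.sum] at h
      ext b
      by_cases hb : b ∈ m.support
      · exact Finset.sum_eq_zero_iff.mp h b hb
      · simpa using Finsupp.notMem_support_iff.mp hb
    rw [hm, monomial_zero', ← algebraMap_eq]
    exact Subalgebra.algebraMap_mem _ r
  | succ t ih =>
    intro m r h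
    obtain ⟨i, m1, e1, d1⟩ := exists_extract m (by omega)
    obtain ⟨j, m2, e2, d2⟩ := exists_extract m1 (by omega)
    obtain ⟨l, m3, e3, d3⟩ := exists_extract m2 (by omega)
    have hm : m = m3 + (Finsupp.single i 1 + Finsupp.single j 1 + Finsupp.single l 1) := by
      rw [e1, e2, e3]; abel
    have : monomial m r = monomial m3 r * (X i * X j * X l) := by
      rw [XXX_eq_monomial, monomial_mul, mul_one, hm]
    rw [this]
    exact mul_mem (ih m3 r (by omega)) (Algebra.subset_adjoin ⟨i, j, l, rfl⟩)
theorem mem_HinvAlg {k : Type*} [Field k] {n d : ℕ} {H : Subgroup (GL (Fin n) k)}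
    {F : MvPolynomial (Fin n × Fin d) k} :
    F ∈ HinvAlg (d := d) H ↔ ∀ h ∈ H, rowAct h F = F := Iff.rfl

theorem part1 {k : Type*} [Field k] (a : k) (ha : IsPrimitiveRoot a 3)
    (H : Subgroup (GL (Fin 3) k))
    (hH : H = Subgroup.zpowers
      ((Units.map (algebraMap k (Matrix (Fin 3) (Fin 3) k)).toMonoidHom)
        (ha.isUnit (by norm_num)).unit : GL (Fin 3) k)) {d : ℕ} :
    HinvAlg (d := d) H = Algebra.adjoin k
      {F : MvPolynomial (Fin 3 × Fin d) k | ∃ i j l, F = X i * X j * X l} := by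
  apply le_antisymm
  · intro F hF
    rw [mem_Hinv_iff a ha H hH] at hF
    rw [F.as_sum]
    exact Subalgebra.sum_mem _ fun m hm => by
      obtain ⟨t, ht⟩ := hF m hm
      exact monomial_mem_adjoin t m _ ht
  · apply Algebra.adjoin_le
    rintro F ⟨i, j, l, rfl⟩
    rw [SetLike.mem_coe, mem_Hinv_iff a ha H hH]
    exact XXX_support i j l

theorem scaleHom_comm_colAct {k : Type*} [Field k] {n d : ℕ} (c : k) (g : GL (Fin d) k)
    (F : MvPolynomial (Fin n × Fin d) k) :
    scaleHom c (colAct g F) = colAct g (scaleHom c F) := by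
  have h : (scaleHom c).comp (colAct (k := k) (n := n) g)
      = (colAct g).comp (scaleHom (σ := Fin n × Fin d) c) := by
    apply MvPolynomial.algHom_ext
    intro p
    simp only [AlgHom.comp_apply, colAct, scaleHom, aeval_X, map_sum, map_mul, aeval_C,
      algebraMap_eq, Finset.mul_sum]
    exact Finset.sum_congr rfl fun s _ => by ring
  exact AlgHom.congr_fun h F

theorem scaleHom_comm_jmap {k : Type*} [Field k] {n d : ℕ} (hnd : n ≤ d) (c : k)
    (f : MvPolynomial (Fin n × Fin n) k) :
    scaleHom c (jmap hnd f) = jmap hnd (scaleHom c f) := by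
  have h : (scaleHom c).comp (jmap (k := k) hnd)
      = (jmap hnd).comp (scaleHom (σ := Fin n × Fin n) c) := by
    apply MvPolynomial.algHom_ext
    intro p
    simp [colAct, scaleHom, jmap, algebraMap_eq]
  exact AlgHom.congr_fun h f

theorem polarized_le {k : Type*} [Field k] (a : k) (ha : IsPrimitiveRoot a 3)
    (H : Subgroup (GL (Fin 3) k))
    (hH : H = Subgroup.zpowers
      ((Units.map (algebraMap k (Matrix (Fin 3) (Fin 3) k)).toMonoidHom)
        (ha.isUnit (by norm_num)).unit : GL (Fin 3) k)) {d : ℕ} (hd : 3 ≤ d) :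
    polarized hd H ≤ HinvAlg H := by
  apply Algebra.adjoin_le
  rintro F ⟨g, f, hf, rfl⟩
  rw [SetLike.mem_coe, mem_HinvAlg]
  intro h hh
  have hh' := hh
  rw [hH, Subgroup.mem_zpowers_iff] at hh'
  obtain ⟨n, rfl⟩ := hh'
  rw [← map_zpow, rowAct_units_map, scaleHom_comm_colAct, scaleHom_comm_jmap]
  have hfix : scaleHom ((((ha.isUnit (by norm_num)).unit ^ n)⁻¹ : kˣ) : k) f = f := by
    have h2 := mem_HinvAlg.mp hf _ hh
    rwa [← map_zpow, rowAct_units_map] at h2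
  rw [hfix]
theorem exists_perm3 {α : Type*} [DecidableEq α] {c0 c1 c2 x y z : α}
    (h01 : c0 ≠ c1) (h02 : c0 ≠ c2) (h12 : c1 ≠ c2)
    (hxy : x ≠ y) (hxz : x ≠ z) (hyz : y ≠ z) :
    ∃ σ : Equiv.Perm α, σ c0 = x ∧ σ c1 = y ∧ σ c2 = z := by
  set σ1 : Equiv.Perm α := Equiv.swap c0 x with hσ1
  have hy1 : σ1.symm y ≠ c0 := by
    intro hcon
    apply hxy
    have h := congrArg σ1 hcon
    rw [Equiv.apply_symm_apply] at h
    rw [h, hσ1, Equiv.swap_apply_left]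
  set σ2 : Equiv.Perm α := Equiv.swap c1 (σ1.symm y) with hσ2
  have hτ0 : σ1 (σ2 c0) = x := by
    rw [hσ2, Equiv.swap_apply_of_ne_of_ne h01 (Ne.symm hy1), hσ1, Equiv.swap_apply_left]
  have hτ1 : σ1 (σ2 c1) = y := by
    rw [hσ2, Equiv.swap_apply_left, Equiv.apply_symm_apply]
  set τz : α := σ2.symm (σ1.symm z) with hτz
  have hz : σ1 (σ2 τz) = z := by rw [hτz]; simp
  have hz0 : τz ≠ c0 := by intro hcon; apply hxz; rw [← hτ0, ← hcon, hz]
  have hz1 : τz ≠ c1 := by intro hcon; apply hyz; rw [← hτ1, ← hcon, hz]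
  refine ⟨((Equiv.swap c2 τz).trans σ2).trans σ1, ?_, ?_, ?_⟩
  · rw [Equiv.trans_apply, Equiv.trans_apply,
      Equiv.swap_apply_of_ne_of_ne h02 (Ne.symm hz0), hτ0]
  · rw [Equiv.trans_apply, Equiv.trans_apply,
      Equiv.swap_apply_of_ne_of_ne h12 (Ne.symm hz1), hτ1]
  · rw [Equiv.trans_apply, Equiv.trans_apply, Equiv.swap_apply_left, hz]

/-- The matrix of a permutation, with columns `c ↦ e_{σ c}`. -/
def permMat {k : Type*} [Field k] {d : ℕ} (σ : Equiv.Perm (Fin d)) :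
    Matrix (Fin d) (Fin d) k :=
  Matrix.of fun i j => if σ j = i then 1 else 0

theorem permMat_mul {k : Type*} [Field k] {d : ℕ} (σ τ : Equiv.Perm (Fin d)) :
    permMat (k := k) σ * permMat τ = permMat (σ * τ) := by
  ext i j
  rw [Matrix.mul_apply, Finset.sum_eq_single (τ j)]
  · simp [permMat, Equiv.Perm.mul_apply]
    congr
  · intro s _ hs
    simp [permMat, Ne.symm hs]
  · intro h; exact absurd (Finset.mem_univ _) h

theorem permMat_one {k : Type*} [Field k] {d : ℕ} :
    permMat (k := k) (1 : Equiv.Perm (Fin d)) = 1 := by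
  ext i j; simp [permMat, Matrix.one_apply, eq_comm]

noncomputable def permUnit {k : Type*} [Field k] {d : ℕ} (σ : Equiv.Perm (Fin d)) :
    GL (Fin d) k :=
  ⟨permMat σ, permMat σ⁻¹,
    by rw [permMat_mul]; simp [permMat_one],
    by rw [permMat_mul]; simp [permMat_one]⟩

theorem tv_aux {k : Type*} [Field k] [CharP k 2] {d : ℕ} {i j : Fin d} (hij : i ≠ j) :
    (1 + Matrix.single i j (1:k)) * (1 + Matrix.single i j (1:k)) = 1 := by
  have h2 : (1:k) + 1 = 0 := CharTwo.add_self_eq_zero 1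
  have hEE : Matrix.single i j (1:k) + Matrix.single i j 1 = 0 := by
    rw [← Matrix.single_add, h2, Matrix.single_zero]
  have hE0 : Matrix.single i j (1:k) * Matrix.single i j 1 = 0 :=
    Matrix.single_mul_single_of_ne (c := (1:k)) i j i (Ne.symm hij) 1
  have expand : (1 + Matrix.single i j (1:k)) * (1 + Matrix.single i j (1:k))
      = 1 + (Matrix.single i j (1:k) + Matrix.single i j 1)
        + Matrix.single i j (1:k) * Matrix.single i j 1 := by
    noncomm_ring
  rw [expand, hEE, hE0, add_zero, add_zero]

noncomputable def tvUnit {k : Type*} [Field k] [CharP k 2] {d : ℕ} (i j : Fin d)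
    (hij : i ≠ j) : GL (Fin d) k :=
  ⟨1 + Matrix.single i j 1, 1 + Matrix.single i j 1, tv_aux hij, tv_aux hij⟩
theorem sumX_permMat {k : Type*} [Field k] {d : ℕ} (i : Fin 3) (σ : Equiv.Perm (Fin d))
    (c : Fin d) :
    (∑ t : Fin d, (X (i, t) : MvPolynomial (Fin 3 × Fin d) k) * C (permMat (k := k) σ t c))
      = X (i, σ c) := by
  simp [permMat, apply_ite C, mul_ite, mul_one, mul_zero, Finset.sum_ite_eq]

theorem sumX_add {k : Type*} [Field k] {d : ℕ} (i : Fin 3)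
    (M N : Matrix (Fin d) (Fin d) k) (c : Fin d) :
    (∑ t : Fin d, (X (i, t) : MvPolynomial (Fin 3 × Fin d) k) * C ((M + N) t c))
      = (∑ t : Fin d, X (i, t) * C (M t c)) + ∑ t : Fin d, X (i, t) * C (N t c) := by
  simp [Matrix.add_apply, mul_add, Finset.sum_add_distrib]

theorem sumX_mulE_same {k : Type*} [Field k] {d : ℕ} (i : Fin 3)
    (M : Matrix (Fin d) (Fin d) k) (c0 c1 : Fin d) :
    (∑ t : Fin d, (X (i, t) : MvPolynomial (Fin 3 × Fin d) k)
        * C ((M * Matrix.single c0 c1 (1 : k)) t c1))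
      = ∑ t : Fin d, X (i, t) * C (M t c0) := by
  simp

theorem sumX_mulE_ne {k : Type*} [Field k] {d : ℕ} (i : Fin 3)
    (M : Matrix (Fin d) (Fin d) k) {c0 c1 c : Fin d} (h : c ≠ c1) :
    (∑ t : Fin d, (X (i, t) : MvPolynomial (Fin 3 × Fin d) k)
        * C ((M * Matrix.single c0 c1 (1 : k)) t c)) = 0 := by
  simp [h]

theorem pol_mem {k : Type*} [Field k] (a : k) (ha : IsPrimitiveRoot a 3)
    (H : Subgroup (GL (Fin 3) k))
    (hH : H = Subgroup.zpowers
      ((Units.map (algebraMap k (Matrix (Fin 3) (Fin 3) k)).toMonoidHom)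
        (ha.isUnit (by norm_num)).unit : GL (Fin 3) k))
    {d : ℕ} (hd : 3 ≤ d) (i₁ i₂ i₃ : Fin 3) (g : GL (Fin d) k) :
    ((∑ t : Fin d, X (i₁, t) * C ((g : Matrix (Fin d) (Fin d) k) t (Fin.castLE hd 0)))
      * (∑ t : Fin d, X (i₂, t) * C ((g : Matrix (Fin d) (Fin d) k) t (Fin.castLE hd 1)))
      * (∑ t : Fin d, X (i₃, t) * C ((g : Matrix (Fin d) (Fin d) k) t (Fin.castLE hd 2))))
      ∈ polarized hd H := by
  apply Algebra.subset_adjoin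
  refine ⟨g, X (i₁, 0) * X (i₂, 1) * X (i₃, 2), ?_, ?_⟩
  · rw [mem_Hinv_iff a ha H hH]
    exact XXX_support _ _ _
  · rw [map_mul, map_mul, map_mul, map_mul]
    simp [jmap, colAct]
section Ps
variable {k : Type*} [Field k] [CharP k 2] (a : k) (ha : IsPrimitiveRoot a 3)
  (H : Subgroup (GL (Fin 3) k))
  (hH : H = Subgroup.zpowers
      ((Units.map (algebraMap k (Matrix (Fin 3) (Fin 3) k)).toMonoidHom)
        (ha.isUnit (by norm_num)).unit : GL (Fin 3) k))
  {d : ℕ} (hd : 3 ≤ d) (i₁ i₂ i₃ : Fin 3)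

include hH

theorem Ppure {q r w : Fin d} (hqr : q ≠ r) (hqw : q ≠ w) (hrw : r ≠ w) :
    (X (i₁, q) * X (i₂, r) * X (i₃, w) : MvPolynomial (Fin 3 × Fin d) k)
      ∈ polarized hd H := by
  have hc01 : Fin.castLE hd (0 : Fin 3) ≠ Fin.castLE hd 1 := by simp [Fin.ext_iff]
  have hc02 : Fin.castLE hd (0 : Fin 3) ≠ Fin.castLE hd 2 := by simp [Fin.ext_iff]
  have hc12 : Fin.castLE hd (1 : Fin 3) ≠ Fin.castLE hd 2 := by simp [Fin.ext_iff]
  obtain ⟨σ, h0, h1, h2⟩ := exists_perm3 hc01 hc02 hc12 hqr hqw hrw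
  have hmem := pol_mem a ha H hH hd i₁ i₂ i₃ (permUnit σ)
  have hval : ((permUnit σ : GL (Fin d) k) : Matrix (Fin d) (Fin d) k) = permMat σ := rfl
  rw [hval, sumX_permMat, sumX_permMat, sumX_permMat, h0, h1, h2] at hmem
  exact hmem

theorem P2' {q r w : Fin d} (hqr : q ≠ r) (hqw : q ≠ w) (hrw : r ≠ w) :
    (X (i₁, q) * (X (i₂, r) + X (i₂, q)) * X (i₃, w) : MvPolynomial (Fin 3 × Fin d) k)
      ∈ polarized hd H := by
  have hc01 : Fin.castLE hd (0 : Fin 3) ≠ Fin.castLE hd 1 := by simp [Fin.ext_iff]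
  have hc02 : Fin.castLE hd (0 : Fin 3) ≠ Fin.castLE hd 2 := by simp [Fin.ext_iff]
  have hc12 : Fin.castLE hd (1 : Fin 3) ≠ Fin.castLE hd 2 := by simp [Fin.ext_iff]
  obtain ⟨σ, h0, h1, h2⟩ := exists_perm3 hc01 hc02 hc12 hqr hqw hrw
  have hmem := pol_mem a ha H hH hd i₁ i₂ i₃ (permUnit σ * tvUnit _ _ hc01)
  have hval : ((permUnit σ * tvUnit _ _ hc01 : GL (Fin d) k) : Matrix (Fin d) (Fin d) k)
      = permMat σ + permMat σ
          * Matrix.single (Fin.castLE hd (0 : Fin 3)) (Fin.castLE hd 1) (1 : k) := by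
    show permMat σ * (1 + _) = _
    rw [mul_add, mul_one]
  rw [hval] at hmem
  simp only [sumX_add, sumX_mulE_ne _ _ hc01, sumX_mulE_ne _ _ (Ne.symm hc12),
    sumX_mulE_same, sumX_permMat, add_zero, h0, h1, h2] at hmem
  exact hmem


theorem P3' {q r w : Fin d} (hqr : q ≠ r) (hqw : q ≠ w) (hrw : r ≠ w) :
    (X (i₁, q) * X (i₂, r) * (X (i₃, w) + X (i₃, q)) : MvPolynomial (Fin 3 × Fin d) k)
      ∈ polarized hd H := by
  have hc01 : Fin.castLE hd (0 : Fin 3) ≠ Fin.castLE hd 1 := by simp [Fin.ext_iff]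
  have hc02 : Fin.castLE hd (0 : Fin 3) ≠ Fin.castLE hd 2 := by simp [Fin.ext_iff]
  have hc12 : Fin.castLE hd (1 : Fin 3) ≠ Fin.castLE hd 2 := by simp [Fin.ext_iff]
  obtain ⟨σ, h0, h1, h2⟩ := exists_perm3 hc01 hc02 hc12 hqr hqw hrw
  have hmem := pol_mem a ha H hH hd i₁ i₂ i₃ (permUnit σ * tvUnit _ _ hc02)
  have hval : ((permUnit σ * tvUnit _ _ hc02 : GL (Fin d) k) : Matrix (Fin d) (Fin d) k)
      = permMat σ + permMat σ
          * Matrix.single (Fin.castLE hd (0 : Fin 3)) (Fin.castLE hd 2) (1 : k) := by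
    show permMat σ * (1 + _) = _
    rw [mul_add, mul_one]
  rw [hval] at hmem
  simp only [sumX_add, sumX_mulE_ne _ _ hc02, sumX_mulE_ne _ _ hc12,
    sumX_mulE_same, sumX_permMat, add_zero, h0, h1, h2] at hmem
  exact hmem

theorem P4' {q r w : Fin d} (hqr : q ≠ r) (hqw : q ≠ w) (hrw : r ≠ w) :
    (X (i₁, q) * X (i₂, r) * (X (i₃, w) + X (i₃, r)) : MvPolynomial (Fin 3 × Fin d) k)
      ∈ polarized hd H := by
  have hc01 : Fin.castLE hd (0 : Fin 3) ≠ Fin.castLE hd 1 := by simp [Fin.ext_iff]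
  have hc02 : Fin.castLE hd (0 : Fin 3) ≠ Fin.castLE hd 2 := by simp [Fin.ext_iff]
  have hc12 : Fin.castLE hd (1 : Fin 3) ≠ Fin.castLE hd 2 := by simp [Fin.ext_iff]
  obtain ⟨σ, h0, h1, h2⟩ := exists_perm3 hc01 hc02 hc12 hqr hqw hrw
  have hmem := pol_mem a ha H hH hd i₁ i₂ i₃ (permUnit σ * tvUnit _ _ hc12)
  have hval : ((permUnit σ * tvUnit _ _ hc12 : GL (Fin d) k) : Matrix (Fin d) (Fin d) k)
      = permMat σ + permMat σ
          * Matrix.single (Fin.castLE hd (1 : Fin 3)) (Fin.castLE hd 2) (1 : k) := by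
    show permMat σ * (1 + _) = _
    rw [mul_add, mul_one]
  rw [hval] at hmem
  simp only [sumX_add, sumX_mulE_ne _ _ hc02, sumX_mulE_ne _ _ hc12,
    sumX_mulE_same, sumX_permMat, add_zero, h0, h1, h2] at hmem
  exact hmem

theorem P5' {q r w : Fin d} (hqr : q ≠ r) (hqw : q ≠ w) (hrw : r ≠ w) :
    (X (i₁, q) * (X (i₂, r) + X (i₂, q)) * (X (i₃, w) + X (i₃, q))
      : MvPolynomial (Fin 3 × Fin d) k) ∈ polarized hd H := by
  have hc01 : Fin.castLE hd (0 : Fin 3) ≠ Fin.castLE hd 1 := by simp [Fin.ext_iff]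
  have hc02 : Fin.castLE hd (0 : Fin 3) ≠ Fin.castLE hd 2 := by simp [Fin.ext_iff]
  have hc12 : Fin.castLE hd (1 : Fin 3) ≠ Fin.castLE hd 2 := by simp [Fin.ext_iff]
  obtain ⟨σ, h0, h1, h2⟩ := exists_perm3 hc01 hc02 hc12 hqr hqw hrw
  have hmem := pol_mem a ha H hH hd i₁ i₂ i₃ (permUnit σ * tvUnit _ _ hc01 * tvUnit _ _ hc02)
  have hval : ((permUnit σ * tvUnit _ _ hc01 * tvUnit _ _ hc02 : GL (Fin d) k)
        : Matrix (Fin d) (Fin d) k)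
      = permMat σ
        + permMat σ
          * Matrix.single (Fin.castLE hd (0 : Fin 3)) (Fin.castLE hd 1) (1 : k)
        + permMat σ
          * Matrix.single (Fin.castLE hd (0 : Fin 3)) (Fin.castLE hd 2) (1 : k) := by
    show permMat σ * (1 + _) * (1 + _) = _
    have hE : Matrix.single (Fin.castLE hd (0 : Fin 3)) (Fin.castLE hd 1) (1 : k)
        * Matrix.single (Fin.castLE hd (0 : Fin 3)) (Fin.castLE hd 2) (1 : k) = 0 :=
      Matrix.single_mul_single_of_ne (c := (1 : k)) (Fin.castLE hd (0 : Fin 3)) (Fin.castLE hd 1) _ (Ne.symm hc01) 1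
    have expand : permMat (k := k) σ
          * (1 + Matrix.single (Fin.castLE hd (0 : Fin 3)) (Fin.castLE hd 1) (1 : k))
          * (1 + Matrix.single (Fin.castLE hd (0 : Fin 3)) (Fin.castLE hd 2) (1 : k))
        = permMat σ
          + permMat σ
            * Matrix.single (Fin.castLE hd (0 : Fin 3)) (Fin.castLE hd 1) (1 : k)
          + (permMat σ
              * Matrix.single (Fin.castLE hd (0 : Fin 3)) (Fin.castLE hd 2) (1 : k)
            + permMat σ
              * (Matrix.single (Fin.castLE hd (0 : Fin 3)) (Fin.castLE hd 1) (1 : k)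
                * Matrix.single (Fin.castLE hd (0 : Fin 3)) (Fin.castLE hd 2) (1 : k))) := by
      noncomm_ring
    rw [expand, hE, mul_zero, add_zero, add_assoc]
  rw [hval] at hmem
  simp only [sumX_add, sumX_mulE_ne _ _ hc01, sumX_mulE_ne _ _ hc02,
    sumX_mulE_ne _ _ (Ne.symm hc12), sumX_mulE_ne _ _ hc12,
    sumX_mulE_same, sumX_permMat, add_zero, h0, h1, h2] at hmem
  exact hmem

end Ps
theorem exists_ne_ne {d : ℕ} (hd : 3 ≤ d) (q w : Fin d) : ∃ r : Fin d, r ≠ q ∧ r ≠ w := by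
  have hns : ¬ (Finset.univ : Finset (Fin d)) ⊆ {q, w} := by
    intro hsub
    have h1 := Finset.card_le_card hsub
    have h2 : ({q, w} : Finset (Fin d)).card ≤ 2 :=
      le_trans (Finset.card_insert_le _ _) (by simp)
    rw [Finset.card_univ, Fintype.card_fin] at h1
    omega
  obtain ⟨r, -, hr⟩ := Finset.not_subset.mp hns
  simp only [Finset.mem_insert, Finset.mem_singleton] at hr
  push_neg at hr
  exact ⟨r, hr.1, hr.2⟩

section Ts
variable {k : Type*} [Field k] [CharP k 2] (a : k) (ha : IsPrimitiveRoot a 3)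
  (H : Subgroup (GL (Fin 3) k))
  (hH : H = Subgroup.zpowers
      ((Units.map (algebraMap k (Matrix (Fin 3) (Fin 3) k)).toMonoidHom)
        (ha.isUnit (by norm_num)).unit : GL (Fin 3) k))
  {d : ℕ} (hd : 3 ≤ d) (i₁ i₂ i₃ : Fin 3)

include hH

theorem T12 {q w : Fin d} (hqw : q ≠ w) :
    (X (i₁, q) * X (i₂, q) * X (i₃, w) : MvPolynomial (Fin 3 × Fin d) k)
      ∈ polarized hd H := by
  obtain ⟨r, hrq, hrw⟩ := exists_ne_ne hd q w
  have h2 := P2' a ha H hH hd i₁ i₂ i₃ (Ne.symm hrq) hqw hrw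
  have h1 := Ppure a ha H hH hd i₁ i₂ i₃ (Ne.symm hrq) hqw hrw
  have heq : (X (i₁, q) * X (i₂, q) * X (i₃, w) : MvPolynomial (Fin 3 × Fin d) k)
      = X (i₁, q) * (X (i₂, r) + X (i₂, q)) * X (i₃, w)
        - X (i₁, q) * X (i₂, r) * X (i₃, w) := by ring
  rw [heq]
  exact sub_mem h2 h1

theorem T13 {q r : Fin d} (hqr : q ≠ r) :
    (X (i₁, q) * X (i₂, r) * X (i₃, q) : MvPolynomial (Fin 3 × Fin d) k)
      ∈ polarized hd H := by
  obtain ⟨w, hwq, hwr⟩ := exists_ne_ne hd q r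
  have h3 := P3' a ha H hH hd i₁ i₂ i₃ hqr (Ne.symm hwq) (Ne.symm hwr)
  have h1 := Ppure a ha H hH hd i₁ i₂ i₃ hqr (Ne.symm hwq) (Ne.symm hwr)
  have heq : (X (i₁, q) * X (i₂, r) * X (i₃, q) : MvPolynomial (Fin 3 × Fin d) k)
      = X (i₁, q) * X (i₂, r) * (X (i₃, w) + X (i₃, q))
        - X (i₁, q) * X (i₂, r) * X (i₃, w) := by ring
  rw [heq]
  exact sub_mem h3 h1

theorem T23 {q r : Fin d} (hqr : q ≠ r) :
    (X (i₁, q) * X (i₂, r) * X (i₃, r) : MvPolynomial (Fin 3 × Fin d) k)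
      ∈ polarized hd H := by
  obtain ⟨w, hwq, hwr⟩ := exists_ne_ne hd q r
  have h4 := P4' a ha H hH hd i₁ i₂ i₃ hqr (Ne.symm hwq) (Ne.symm hwr)
  have h1 := Ppure a ha H hH hd i₁ i₂ i₃ hqr (Ne.symm hwq) (Ne.symm hwr)
  have heq : (X (i₁, q) * X (i₂, r) * X (i₃, r) : MvPolynomial (Fin 3 × Fin d) k)
      = X (i₁, q) * X (i₂, r) * (X (i₃, w) + X (i₃, r))
        - X (i₁, q) * X (i₂, r) * X (i₃, w) := by ring
  rw [heq]
  exact sub_mem h4 h1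

theorem Tall (q : Fin d) :
    (X (i₁, q) * X (i₂, q) * X (i₃, q) : MvPolynomial (Fin 3 × Fin d) k)
      ∈ polarized hd H := by
  obtain ⟨r, hrq, -⟩ := exists_ne_ne hd q q
  obtain ⟨s, hsq, hsr⟩ := exists_ne_ne hd q r
  have h5 := P5' a ha H hH hd i₁ i₂ i₃ (Ne.symm hrq) (Ne.symm hsq) (Ne.symm hsr)
  have hA := Ppure a ha H hH hd i₁ i₂ i₃ (Ne.symm hrq) (Ne.symm hsq) (Ne.symm hsr)
  have hB := T13 a ha H hH hd i₁ i₂ i₃ (Ne.symm hrq)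
  have hC := T12 a ha H hH hd i₁ i₂ i₃ (Ne.symm hsq)
  have heq : (X (i₁, q) * X (i₂, q) * X (i₃, q) : MvPolynomial (Fin 3 × Fin d) k)
      = X (i₁, q) * (X (i₂, r) + X (i₂, q)) * (X (i₃, s) + X (i₃, q))
        - X (i₁, q) * X (i₂, r) * X (i₃, s)
        - X (i₁, q) * X (i₂, r) * X (i₃, q)
        - X (i₁, q) * X (i₂, q) * X (i₃, s) := by ring
  rw [heq]
  exact sub_mem (sub_mem (sub_mem h5 hA) hB) hC

theorem Tmem (q1 q2 q3 : Fin d) :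
    (X (i₁, q1) * X (i₂, q2) * X (i₃, q3) : MvPolynomial (Fin 3 × Fin d) k)
      ∈ polarized hd H := by
  by_cases h12 : q1 = q2
  · subst h12
    by_cases h13 : q1 = q3
    · subst h13
      exact Tall a ha H hH hd i₁ i₂ i₃ q1
    · exact T12 a ha H hH hd i₁ i₂ i₃ h13
  · by_cases h13 : q1 = q3
    · subst h13
      exact T13 a ha H hH hd i₁ i₂ i₃ h12
    · by_cases h23 : q2 = q3
      · subst h23
        exact T23 a ha H hH hd i₁ i₂ i₃ h12
      · exact Ppure a ha H hH hd i₁ i₂ i₃ h12 h13 h23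

end Ts


/-- Theorem 23(c), second example: `char k = 2`, `H = ⟨a·I₃⟩ ≤ GL_3(k)` with `a` a primitive
cube root of unity. Then `^H k[M_{3,d}]` is generated by the monomials of total degree 3, and
`GL_d * j(^H k[M_{3,3}]) = ^H k[M_{3,d}]`. -/
theorem stmt14 {k : Type*} [Field k] [IsAlgClosed k] [CharP k 2] {d : ℕ} (hd : 3 ≤ d)
    (a : k) (ha : IsPrimitiveRoot a 3)
    (H : Subgroup (GL (Fin 3) k))
    (hH : H = Subgroup.zpowers
      ((Units.map (algebraMap k (Matrix (Fin 3) (Fin 3) k)).toMonoidHom)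
        (ha.isUnit (by norm_num)).unit : GL (Fin 3) k)) :
    HinvAlg (d := d) H
        = Algebra.adjoin k
            {F : MvPolynomial (Fin 3 × Fin d) k |
              ∃ i j l : Fin 3 × Fin d, F = X i * X j * X l} ∧
    polarized hd H = HinvAlg H := by
  constructor
  · exact part1 a ha H hH
  · apply le_antisymm
    · exact polarized_le a ha H hH hd
    · rw [part1 a ha H hH]
      apply Algebra.adjoin_le
      rintro F ⟨⟨j1, q1⟩, ⟨j2, q2⟩, ⟨j3, q3⟩, rfl⟩
      exact Tmem a ha H hH hd j1 j2 j3 q1 q2 q3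
end
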